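/- arXiv:math/0601615 — 3 statements merged into one kernel-verified Lean document; each statement's English description precedes it below -/
import Mathlib

section
/- Let λ/μ be a right-aligned skew Ferrers matrix of size n×n. Then the set 𝔖(λ/μ) of rook configurations on λ/μ with n rooks, viewed as a set of permutations of S_n, is a lower order ideal in the Bruhat order on S_n; that is, if ρ ∈ 𝔖(λ/μ) and σ ≤ ρ in Bruhat order, then σ ∈ 𝔖(λ/μ). -/
open Finset

/-- A board: the set of one-entries (cells) of a zero-one matrix, as (row, column) pairs. -/
abbrev Board := Finset (ℕ × ℕ)

/-- The full `m × n` grid of cells. -/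
def grid (m n : ℕ) : Board := Finset.range m ×ˢ Finset.range n

/-- The (non-taking) rook configurations on the board `A` with `k` rooks. -/
def rookConfigs (A : Board) (k : ℕ) : Finset Board :=
  A.powerset.filter fun C =>
    C.card = k ∧ ∀ c ∈ C, ∀ c' ∈ C, c ≠ c' → c.1 ≠ c'.1 ∧ c.2 ≠ c'.2

/-- `invStat m n C`: the number of (not necessarily positive) cells of an `m × n` matrix
having no rook of the configuration `C` weakly to the right in the same row nor weakly
below in the same column. -/
def invStat (m n : ℕ) (C : Board) : ℕ :=
  ((grid m n).filter fun a =>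
    (∀ c ∈ C, c.1 = a.1 → c.2 < a.2) ∧ (∀ c ∈ C, c.2 = a.2 → c.1 < a.1)).card

/-- The `k`-th `q`-rook number of a board `A` of ambient matrix size `m × n`. -/
def qRook {F : Type*} [CommSemiring F] (q : F) (m n : ℕ) (A : Board) (k : ℕ) : F :=
  ∑ C ∈ rookConfigs A k, q ^ invStat m n C

/-- The `q`-analogue `[x]_q = 1 + q + ⋯ + q^(x-1)`. -/
def qInt {F : Type*} [CommSemiring F] (q : F) (x : ℕ) : F := ∑ i ∈ Finset.range x, q ^ i

/-- The `q`-factorial `[n]!_q = [1]_q [2]_q ⋯ [n]_q`. -/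
def qFact {F : Type*} [CommSemiring F] (q : F) (n : ℕ) : F := ∏ i ∈ Finset.range n, qInt q (i + 1)

/-- The `q`-Stirling numbers `S_{n,k}(q)` of Garsia and Remmel. -/
def qStirling {F : Type*} [CommSemiring F] (q : F) : ℕ → ℕ → F
  | 0, 0 => 1
  | 0, _ + 1 => 0
  | n + 1, k => (if k = 0 then 0 else q ^ (k - 1) * qStirling q n (k - 1)) + qInt q k * qStirling q n k

/-- Stirling numbers of the second kind. -/
def stirling2 : ℕ → ℕ → ℕ
  | 0, 0 => 1
  | 0, _ + 1 => 0
  | n + 1, k => (if k = 0 then 0 else stirling2 n (k - 1)) + k * stirling2 n k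

/-- The board `A` covers the rook configuration of the permutation `π`
(a rook at `(i, π i)` for every row `i`, zero-indexed). -/
def Covers {n : ℕ} (A : Board) (π : Equiv.Perm (Fin n)) : Prop :=
  ∀ i : Fin n, ((i : ℕ), (π i : ℕ)) ∈ A

/-- `bruhatRank π i j` is the number of rooks of `π` weakly north-east of cell `(i,j)`,
i.e. `|{a ≤ i : π a ≥ j}|`. -/
def bruhatRank {n : ℕ} (π : Equiv.Perm (Fin n)) (i j : Fin n) : ℕ :=
  (Finset.univ.filter fun a : Fin n => a ≤ i ∧ j ≤ π a).card

/-- Bruhat order on the symmetric group, via the standard (Ehresmann) rank criterion. -/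
def BruhatLE {n : ℕ} (u w : Equiv.Perm (Fin n)) : Prop :=
  ∀ i j : Fin n, bruhatRank u i j ≤ bruhatRank w i j


instance {n : ℕ} (A : Board) (π : Equiv.Perm (Fin n)) : Decidable (Covers A π) :=
  inferInstanceAs (Decidable (∀ i : Fin n, ((i : ℕ), (π i : ℕ)) ∈ A))

instance {n : ℕ} (u w : Equiv.Perm (Fin n)) : Decidable (BruhatLE u w) :=
  inferInstanceAs (Decidable (∀ i j : Fin n, bruhatRank u i j ≤ bruhatRank w i j))

/-- The number of inversions of a permutation (= its Coxeter length). -/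
def inversions {n : ℕ} (π : Equiv.Perm (Fin n)) : ℕ :=
  (Finset.univ.filter fun p : Fin n × Fin n => p.1 < p.2 ∧ π p.2 < π p.1).card

/-- A right-aligned Ferrers matrix inside the `n × n` grid: every one-entry has one-entries
(weakly) to its right in the grid and above it. -/
def IsRightFerrers (n : ℕ) (A : Board) : Prop :=
  A ⊆ grid n n ∧ ∀ i j i' j' : ℕ, (i, j) ∈ A → i' ≤ i → j ≤ j' → j' < n → (i', j') ∈ A

/-- A left-aligned Ferrers matrix inside the `n × n` grid. -/
def IsLeftFerrers (n : ℕ) (A : Board) : Prop :=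
  A ⊆ grid n n ∧ ∀ i j i' j' : ℕ, (i, j) ∈ A → i' ≤ i → j' ≤ j → (i', j') ∈ A

/-- A right-aligned skew Ferrers matrix: an entrywise difference `λ - μ` of right-aligned
Ferrers matrices with `μ ≤ λ`. -/
def IsRightSkewFerrers (n : ℕ) (B : Board) : Prop :=
  ∃ L M : Board, IsRightFerrers n L ∧ IsRightFerrers n M ∧ M ⊆ L ∧ B = L \ M

/-- A left-aligned skew Ferrers matrix. -/
def IsLeftSkewFerrers (n : ℕ) (B : Board) : Prop :=
  ∃ L M : Board, IsLeftFerrers n L ∧ IsLeftFerrers n M ∧ M ⊆ L ∧ B = L \ M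

/-- `H` is the right hull of `π`: the smallest right-aligned skew Ferrers matrix covering `π`. -/
def IsRightHull {n : ℕ} (π : Equiv.Perm (Fin n)) (H : Board) : Prop :=
  IsRightSkewFerrers n H ∧ Covers H π ∧
    ∀ B : Board, IsRightSkewFerrers n B → Covers B π → H ⊆ B

/-- `H` is the left hull of `π`: the smallest left-aligned skew Ferrers matrix covering `π`. -/
def IsLeftHull {n : ℕ} (π : Equiv.Perm (Fin n)) (H : Board) : Prop :=
  IsLeftSkewFerrers n H ∧ Covers H π ∧
    ∀ B : Board, IsLeftSkewFerrers n B → Covers B π → H ⊆ B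

/-- `π` contains the pattern `σ`. -/
def ContainsPattern {n m : ℕ} (π : Equiv.Perm (Fin n)) (σ : Equiv.Perm (Fin m)) : Prop :=
  ∃ f : Fin m → Fin n, StrictMono f ∧ ∀ a b : Fin m, σ a < σ b ↔ π (f a) < π (f b)

/-- The pattern 4231 (one-line notation, here zero-indexed). -/
def p4231 : Equiv.Perm (Fin 4) := ⟨![3,1,2,0], ![3,1,2,0], by decide, by decide⟩
/-- The pattern 35142. -/
def p35142 : Equiv.Perm (Fin 5) := ⟨![2,4,0,3,1], ![2,4,0,3,1], by decide, by decide⟩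
/-- The pattern 42513. -/
def p42513 : Equiv.Perm (Fin 5) := ⟨![3,1,4,0,2], ![3,1,4,0,2], by decide, by decide⟩
/-- The pattern 351624. -/
def p351624 : Equiv.Perm (Fin 6) := ⟨![2,4,0,5,1,3], ![2,4,0,5,1,3], by decide, by decide⟩

/-- `π` avoids the four patterns 4231, 35142, 42513 and 351624. -/
def AvoidsThePatterns {n : ℕ} (π : Equiv.Perm (Fin n)) : Prop :=
  ¬ ContainsPattern π p4231 ∧ ¬ ContainsPattern π p35142 ∧
    ¬ ContainsPattern π p42513 ∧ ¬ ContainsPattern π p351624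

/-- Rotating an `m × n` board by 180 degrees. -/
def rot180 (m n : ℕ) (A : Board) : Board := A.image fun c => (m - 1 - c.1, n - 1 - c.2)

/-- Flipping an `m`-row board upside down. -/
def flipud (m : ℕ) (A : Board) : Board := A.image fun c => (m - 1 - c.1, c.2)

/-- The block matrix `B # A` with `B` (of size `nB × nB`) in the top-left corner, `A`
(of size `mA × mA`) in the bottom-right corner, and all-ones off-diagonal blocks. -/
def blockSharp (nB mA : ℕ) (B A : Board) : Board :=
  B ∪ Finset.range nB ×ˢ Finset.Ico nB (nB + mA) ∪ Finset.Ico nB (nB + mA) ×ˢ Finset.range nB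
    ∪ A.image fun c => (c.1 + nB, c.2 + nB)

/-- The 180-degree rotation of a permutation of `Fin n`: `π^↻ (i) = n - 1 - π (n - 1 - i)`. -/
def rot180Perm {n : ℕ} (π : Equiv.Perm (Fin n)) : Equiv.Perm (Fin n) :=
  (Fin.revPerm.trans π).trans Fin.revPerm

/-- The statistic `neg(π) = |{i ∈ [n+1, 2n] : π i ≤ n}|` (one-indexed) on `S_{2n}`. -/
def negStat (n : ℕ) (π : Equiv.Perm (Fin (2 * n))) : ℕ :=
  (Finset.univ.filter fun i : Fin (2 * n) => n ≤ (i : ℕ) ∧ (π i : ℕ) < n).card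

/-- `RB^M (q, t) = Σ_{π ∈ 𝔖ₙᴮ ∩ 𝔖(M)} q^{inv π} t^{neg π}` over rotationally symmetric
permutations of `S_{2n}` covered by the `2n × 2n` board `M`. -/
def RB {F : Type*} [CommSemiring F] (q t : F) (n : ℕ) (M : Board) : F :=
  ∑ π ∈ Finset.univ.filter fun π : Equiv.Perm (Fin (2 * n)) => rot180Perm π = π ∧ Covers M π,
    q ^ inversions π * t ^ negStat n π

/-- The triangular board `T_m` with ones on and above the secondary diagonal. -/
def Tboard (m : ℕ) : Board := (grid m m).filter fun c => c.1 + c.2 < m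

/-- If `λ/μ` is a right-aligned skew Ferrers matrix of size `n × n`, then the
set `𝔖(λ/μ)` of `n`-rook configurations on `λ/μ` (viewed as a set of permutations of `S_n`) is
a lower order ideal in the Bruhat order on `S_n`. -/
theorem skew_ferrers_order_ideal (n : ℕ) (L M : Board)
    (hL : IsRightFerrers n L) (hM : IsRightFerrers n M) (hML : M ⊆ L)
    (ρ σ : Equiv.Perm (Fin n)) (hρ : Covers (L \ M) ρ) (hσρ : BruhatLE σ ρ) :
    Covers (L \ M) σ := by
  classical
  intro i
  have hρL : ∀ a : Fin n, ((a:ℕ), (ρ a:ℕ)) ∈ L := fun a => (Finset.mem_sdiff.mp (hρ a)).1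
  have hρM : ∀ a : Fin n, ((a:ℕ), (ρ a:ℕ)) ∉ M := fun a => (Finset.mem_sdiff.mp (hρ a)).2
  rw [Finset.mem_sdiff]
  constructor
  · -- (i, σ i) ∈ L
    by_contra hiL
    have hgt : ∀ a : Fin n, (i:ℕ) ≤ (a:ℕ) → (σ i:ℕ) < (ρ a:ℕ) := by
      intro a ha
      by_contra hle
      push_neg at hle
      exact hiL (hL.2 a (ρ a) i (σ i) (hρL a) ha hle (σ i).isLt)
    have hj1 : (σ i:ℕ) + 1 < n := Nat.lt_of_le_of_lt (hgt i le_rfl) (ρ i).isLt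
    have hi1 : 0 < (i:ℕ) := by
      by_contra h0
      push_neg at h0
      have h1 := hgt (ρ.symm (σ i)) (by omega)
      simp at h1
    have hin : (i:ℕ) < n := i.isLt
    set i' : Fin n := ⟨(i:ℕ) - 1, by omega⟩ with hi'
    set j' : Fin n := ⟨(σ i:ℕ) + 1, hj1⟩ with hj'
    have hSR := hσρ i' j'
    unfold bruhatRank at hSR
    have hle' : ∀ a : Fin n, (a ≤ i') ↔ a < i := by
      intro a; rw [Fin.le_def, Fin.lt_def]; simp only [hi']; omega
    have hge' : ∀ b : Fin n, (j' ≤ b) ↔ σ i < b := by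
      intro b; rw [Fin.le_def, Fin.lt_def]; simp only [hj']; omega
    -- lower bound for the σ-side rank
    have h1 : (i:ℕ) ≤ (Finset.univ.filter fun a : Fin n => a ≤ i' ∧ j' ≤ σ a).card + (σ i:ℕ) := by
      have hC : (Finset.univ.filter fun a : Fin n => a < i ∧ σ a ≤ σ i).card ≤ (σ i:ℕ) := by
        rw [← Fin.card_Iio (σ i)]
        apply Finset.card_le_card_of_injOn (fun a => σ a)
        · intro a ha
          simp only [Finset.mem_coe, Finset.mem_filter, Finset.mem_univ, true_and] at ha
          simp only [Finset.mem_coe, Finset.mem_Iio]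
          exact lt_of_le_of_ne ha.2 (fun h => (ne_of_lt ha.1) (σ.injective h))
        · intro x _ y _ h; exact σ.injective h
      have hsub : Finset.Iio i ⊆
          (Finset.univ.filter fun a : Fin n => a ≤ i' ∧ j' ≤ σ a) ∪
          (Finset.univ.filter fun a : Fin n => a < i ∧ σ a ≤ σ i) := by
        intro a ha
        simp only [Finset.mem_Iio] at ha
        rcases le_or_gt (σ a) (σ i) with h | h
        · exact Finset.mem_union_right _ (by simp [ha, h])
        · exact Finset.mem_union_left _ (by simp [hle', hge', ha, h])
      have := Finset.card_le_card hsub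
      rw [Fin.card_Iio] at this
      calc (i:ℕ) ≤ _ := this
        _ ≤ _ + _ := Finset.card_union_le _ _
        _ ≤ _ := by omega
    -- upper bound for the ρ-side rank
    have h2 : (Finset.univ.filter fun a : Fin n => a ≤ i' ∧ j' ≤ ρ a).card + (n - (i:ℕ)) ≤
        (Finset.univ.filter fun a : Fin n => σ i < ρ a).card := by
      have hdisj : Disjoint (Finset.univ.filter fun a : Fin n => a ≤ i' ∧ j' ≤ ρ a)
          (Finset.univ.filter fun a : Fin n => ¬ a < i) := by
        rw [Finset.disjoint_left]
        intro a ha hb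
        simp only [Finset.mem_filter, Finset.mem_univ, true_and] at ha hb
        exact hb ((hle' a).mp ha.1)
      have hcard2 : (Finset.univ.filter fun a : Fin n => ¬ a < i).card = n - (i:ℕ) := by
        have h := Finset.card_filter_add_card_filter_not
          (s := (Finset.univ : Finset (Fin n))) (p := fun a : Fin n => a < i)
        have he : (Finset.univ.filter fun a : Fin n => a < i) = Finset.Iio i := by
          ext a; simp
        rw [he, Fin.card_Iio, Finset.card_univ, Fintype.card_fin] at h
        omega
      have hsub : (Finset.univ.filter fun a : Fin n => a ≤ i' ∧ j' ≤ ρ a) ∪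
          (Finset.univ.filter fun a : Fin n => ¬ a < i) ⊆
          (Finset.univ.filter fun a : Fin n => σ i < ρ a) := by
        intro a ha
        rcases Finset.mem_union.mp ha with h | h <;>
          simp only [Finset.mem_filter, Finset.mem_univ, true_and] at h ⊢
        · exact (hge' _).mp h.2
        · exact Fin.lt_def.mpr (hgt a (Fin.le_def.mp (Fin.not_lt.mp h)))
      have := Finset.card_le_card hsub
      rwa [Finset.card_union_of_disjoint hdisj, hcard2] at this
    have h3 : (Finset.univ.filter fun a : Fin n => σ i < ρ a).card + ((σ i:ℕ) + 1) ≤ n := by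
      have hc : ((σ i:ℕ) + 1) ≤ (Finset.univ.filter fun a : Fin n => ¬ σ i < ρ a).card := by
        rw [← Fin.card_Iic (σ i)]
        apply Finset.card_le_card_of_injOn (fun b => ρ.symm b)
        · intro b hb
          simp only [Finset.mem_coe, Finset.mem_Iic] at hb
          simp only [Finset.mem_coe, Finset.mem_filter, Finset.mem_univ, true_and, Equiv.apply_symm_apply]
          exact not_lt.mpr hb
        · intro x _ y _ h; exact ρ.symm.injective h
      have h := Finset.card_filter_add_card_filter_not
        (s := (Finset.univ : Finset (Fin n))) (p := fun a : Fin n => σ i < ρ a)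
      rw [Finset.card_univ, Fintype.card_fin] at h
      omega
    omega
  · -- (i, σ i) ∉ M
    intro hiM
    have h1 : 0 < bruhatRank σ i (σ i) := by
      rw [bruhatRank]
      exact Finset.card_pos.mpr ⟨i, by simp⟩
    have h2 := lt_of_lt_of_le h1 (hσρ i (σ i))
    rw [bruhatRank, Finset.card_pos] at h2
    obtain ⟨a, ha⟩ := h2
    simp only [Finset.mem_filter] at ha
    exact hρM a (hM.2 i (σ i) a (ρ a) hiM ha.2.1 ha.2.2 (ρ a).isLt)
end

section
/- Let u, w ∈ S_n and suppose that both w and u^↕ avoid the patterns 4231, 35142, 42513, and 351624 (where u^↕(i) = u(n−i+1)). Then the Poincaré polynomial of the Bruhat interval [u,w], Poin_{[u,w]}(q) = Σ_{v ∈ [u,w]} q^{ℓ(v)} (where ℓ is the number of inversions), equals the n-th q-rook number R_n^{H_R(w) ∩ H_L(u)}(q) of the board H_R(w) ∩ H_L(u). -/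
open Finset

open Equiv

namespace SJO

variable {n : ℕ}

/-- ℕ-indexed NE rank: number of `a < i` with `π a ≥ j`. -/
def nrank (π : Perm (Fin n)) (i j : ℕ) : ℕ :=
  (Finset.univ.filter fun a : Fin n => (a : ℕ) < i ∧ j ≤ (π a : ℕ)).card

/-- ℕ-indexed SW rank: number of `b ≥ i` with `π b < j`. -/
def srank (π : Perm (Fin n)) (i j : ℕ) : ℕ :=
  (Finset.univ.filter fun b : Fin n => i ≤ (b : ℕ) ∧ (π b : ℕ) < j).card

lemma nrank_eq_zero_of_le (π : Perm (Fin n)) (i : ℕ) {j : ℕ} (hj : n ≤ j) :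
    nrank π i j = 0 := by
  unfold nrank
  rw [Finset.card_eq_zero, Finset.filter_eq_empty_iff]
  intro a _
  have := (π a).isLt
  omega

lemma nrank_zero_left (π : Perm (Fin n)) (j : ℕ) : nrank π 0 j = 0 := by
  unfold nrank
  rw [Finset.card_eq_zero, Finset.filter_eq_empty_iff]
  intro a _; omega

lemma nrank_mono_row (π : Perm (Fin n)) {i i' : ℕ} (h : i ≤ i') (j : ℕ) :
    nrank π i j ≤ nrank π i' j := by
  apply Finset.card_le_card
  intro a ha
  simp only [Finset.mem_filter] at *
  exact ⟨ha.1, by omega, ha.2.2⟩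

lemma nrank_anti_col (π : Perm (Fin n)) (i : ℕ) {j j' : ℕ} (h : j ≤ j') :
    nrank π i j' ≤ nrank π i j := by
  apply Finset.card_le_card
  intro a ha
  simp only [Finset.mem_filter] at *
  exact ⟨ha.1, ha.2.1, by omega⟩

lemma nrank_stable (π : Perm (Fin n)) {i : ℕ} (h : n ≤ i) (j : ℕ) :
    nrank π i j = nrank π n j := by
  unfold nrank
  congr 1
  apply Finset.filter_congr
  intro a _
  have := a.isLt
  constructor <;> (intro x; exact ⟨by omega, x.2⟩)

lemma card_val_lt {i : ℕ} (hi : i ≤ n) :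
    (Finset.univ.filter fun a : Fin n => (a : ℕ) < i).card = i := by
  rw [Finset.card_bij' (i := fun (a : Fin n) _ => (a : ℕ))
    (j := fun (m : ℕ) (hm : m ∈ Finset.range i) => (⟨m, by
      simp only [Finset.mem_range] at hm; omega⟩ : Fin n))]
  · exact Finset.card_range i
  · intro a ha; simp only [Finset.mem_filter] at ha; simp [ha.2]
  · intro m hm; simp only [Finset.mem_range] at hm; simp [hm]
  · intro a ha; simp
  · intro m hm; simp

lemma card_pi_lt (π : Perm (Fin n)) {j : ℕ} (hj : j ≤ n) :
    (Finset.univ.filter fun a : Fin n => (π a : ℕ) < j).card = j := by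
  rw [Finset.card_bij' (i := fun (a : Fin n) _ => π a)
    (j := fun (b : Fin n) _ => π.symm b)]
  · exact card_val_lt hj
  · intro a ha; simp only [Finset.mem_filter, Finset.mem_univ, true_and] at *; exact ha
  · intro b hb; simp only [Finset.mem_filter, Finset.mem_univ, true_and] at *; simpa using hb
  · intro a _; simp
  · intro b _; simp

lemma nrank_add_eq (π : Perm (Fin n)) {i j : ℕ} (hi : i ≤ n) (hj : j ≤ n) :
    nrank π i j + j = i + srank π i j := by
  classical
  have h1 : nrank π i j +
      (Finset.univ.filter fun a : Fin n => (a : ℕ) < i ∧ (π a : ℕ) < j).card = i := by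
    have key := Finset.card_filter_add_card_filter_not
      (s := Finset.univ.filter fun a : Fin n => (a : ℕ) < i)
      (p := fun a : Fin n => j ≤ (π a : ℕ))
    rw [Finset.filter_filter, Finset.filter_filter, card_val_lt (n := n) hi] at key
    have eB : (Finset.univ.filter fun a : Fin n => (a : ℕ) < i ∧ ¬ j ≤ (π a : ℕ))
        = (Finset.univ.filter fun a : Fin n => (a : ℕ) < i ∧ (π a : ℕ) < j) :=
      Finset.filter_congr (fun a _ => by simp only [not_le])
    rw [eB] at key
    unfold nrank
    exact key
  have h2 : (Finset.univ.filter fun a : Fin n => (a : ℕ) < i ∧ (π a : ℕ) < j).card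
      + srank π i j = j := by
    have key := Finset.card_filter_add_card_filter_not
      (s := Finset.univ.filter fun a : Fin n => (π a : ℕ) < j)
      (p := fun a : Fin n => (a : ℕ) < i)
    rw [Finset.filter_filter, Finset.filter_filter, card_pi_lt (n := n) π hj] at key
    have eA : (Finset.univ.filter fun a : Fin n => (π a : ℕ) < j ∧ (a : ℕ) < i)
        = (Finset.univ.filter fun a : Fin n => (a : ℕ) < i ∧ (π a : ℕ) < j) :=
      Finset.filter_congr (fun a _ => and_comm)
    have eB : (Finset.univ.filter fun a : Fin n => (π a : ℕ) < j ∧ ¬ (a : ℕ) < i)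
        = (Finset.univ.filter fun b : Fin n => i ≤ (b : ℕ) ∧ (π b : ℕ) < j) := by
      apply Finset.filter_congr
      intro a _
      constructor
      · rintro ⟨h1', h2'⟩; exact ⟨by omega, h1'⟩
      · rintro ⟨h1', h2'⟩; exact ⟨h2', by omega⟩
    rw [eA, eB] at key
    unfold srank
    exact key
  omega

lemma nrank_le_rows (π : Perm (Fin n)) {i : ℕ} (hi : i ≤ n) (j : ℕ) :
    nrank π i j ≤ i := by
  calc nrank π i j ≤ (Finset.univ.filter fun a : Fin n => (a : ℕ) < i).card :=
        Finset.card_le_card (by intro a ha; simp only [Finset.mem_filter] at *; exact ⟨ha.1, ha.2.1⟩)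
    _ = i := card_val_lt hi

lemma nrank_top (π : Perm (Fin n)) {j : ℕ} (hj : j ≤ n) : nrank π n j = n - j := by
  have := nrank_add_eq π (le_refl n) hj
  have hs : srank π n j = 0 := by
    unfold srank
    rw [Finset.card_eq_zero, Finset.filter_eq_empty_iff]
    intro b _
    have := b.isLt; omega
  omega

lemma nrank_le_cols (π : Perm (Fin n)) (i : ℕ) {j : ℕ} (hj : j ≤ n) :
    nrank π i j ≤ n - j := by
  rcases le_or_gt i n with h | h
  · calc nrank π i j ≤ nrank π n j := nrank_mono_row π h j
      _ = n - j := nrank_top π hj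
  · rw [nrank_stable π h.le, nrank_top π hj]

/-- Row-step, increment case. -/
lemma nrank_row_succ (π : Perm (Fin n)) {i j : ℕ} (hi : i < n)
    (h : j ≤ (π ⟨i, hi⟩ : ℕ)) : nrank π (i + 1) j = nrank π i j + 1 := by
  unfold nrank
  have : (Finset.univ.filter fun a : Fin n => (a : ℕ) < i + 1 ∧ j ≤ (π a : ℕ))
      = insert ⟨i, hi⟩ (Finset.univ.filter fun a : Fin n => (a : ℕ) < i ∧ j ≤ (π a : ℕ)) := by
    ext a
    simp only [Finset.mem_insert, Finset.mem_filter, Finset.mem_univ, true_and]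
    constructor
    · rintro ⟨h1, h2⟩
      rcases Nat.lt_succ_iff_lt_or_eq.mp h1 with h1 | h1
      · exact Or.inr ⟨h1, h2⟩
      · exact Or.inl (Fin.ext h1)
    · rintro (rfl | ⟨h1, h2⟩)
      · exact ⟨by simp, h⟩
      · exact ⟨by omega, h2⟩
  rw [this, Finset.card_insert_of_notMem]
  simp

/-- Row-step, equal case. -/
lemma nrank_row_eq (π : Perm (Fin n)) {i j : ℕ} (hi : i < n)
    (h : (π ⟨i, hi⟩ : ℕ) < j) : nrank π (i + 1) j = nrank π i j := by
  unfold nrank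
  congr 1
  ext a
  simp only [Finset.mem_filter, Finset.mem_univ, true_and]
  constructor
  · rintro ⟨h1, h2⟩
    refine ⟨?_, h2⟩
    rcases Nat.lt_succ_iff_lt_or_eq.mp h1 with h1 | h1
    · exact h1
    · exfalso; have : a = ⟨i, hi⟩ := Fin.ext h1; subst this; omega
  · rintro ⟨h1, h2⟩; exact ⟨by omega, h2⟩

lemma nrank_row_le (π : Perm (Fin n)) (i j : ℕ) :
    nrank π (i + 1) j ≤ nrank π i j + 1 := by
  rcases lt_or_ge i n with hi | hi
  · rcases le_or_gt j (π ⟨i, hi⟩ : ℕ) with h | h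
    · rw [nrank_row_succ π hi h]
    · rw [nrank_row_eq π hi h]; omega
  · rw [nrank_stable π (by omega), nrank_stable π hi]; omega

/-- Column-step, equal case. -/
lemma nrank_col_eq (π : Perm (Fin n)) {i j : ℕ}
    (h : ∀ a : Fin n, (a : ℕ) < i → (π a : ℕ) ≠ j) : nrank π i j = nrank π i (j + 1) := by
  unfold nrank
  congr 1
  apply Finset.filter_congr
  intro a _
  constructor
  · rintro ⟨h1, h2⟩; exact ⟨h1, by have := h a h1; omega⟩
  · rintro ⟨h1, h2⟩; exact ⟨h1, by omega⟩

/-- Column-step, increment case. -/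
lemma nrank_col_succ (π : Perm (Fin n)) {i j : ℕ} (a : Fin n) (ha : (a : ℕ) < i)
    (hv : (π a : ℕ) = j) : nrank π i j = nrank π i (j + 1) + 1 := by
  unfold nrank
  have : (Finset.univ.filter fun x : Fin n => (x : ℕ) < i ∧ j ≤ (π x : ℕ))
      = insert a (Finset.univ.filter fun x : Fin n => (x : ℕ) < i ∧ j + 1 ≤ (π x : ℕ)) := by
    ext x
    simp only [Finset.mem_insert, Finset.mem_filter, Finset.mem_univ, true_and]
    constructor
    · rintro ⟨h1, h2⟩
      rcases eq_or_lt_of_le h2 with h2 | h2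
      · left
        have : π x = π a := Fin.ext (by omega)
        exact π.injective this
      · right; exact ⟨h1, by omega⟩
    · rintro (rfl | ⟨h1, h2⟩)
      · exact ⟨ha, by omega⟩
      · exact ⟨h1, by omega⟩
  rw [this, Finset.card_insert_of_notMem]
  simp [hv]

lemma nrank_col_le (π : Perm (Fin n)) (i j : ℕ) :
    nrank π i j ≤ nrank π i (j + 1) + 1 := by
  by_cases h : ∃ a : Fin n, (a : ℕ) < i ∧ (π a : ℕ) = j
  · obtain ⟨a, ha, hv⟩ := h
    rw [nrank_col_succ π a ha hv]
  · push_neg at h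
    rw [nrank_col_eq π h]; omega

end SJO
namespace SJO

variable {n : ℕ}

lemma bruhatRank_eq (π : Perm (Fin n)) (i j : Fin n) :
    bruhatRank π i j = nrank π ((i : ℕ) + 1) (j : ℕ) := by
  unfold bruhatRank nrank
  congr 1
  apply Finset.filter_congr
  intro a _
  rw [Fin.le_def, Fin.le_def]
  constructor <;> (intro x; exact ⟨by omega, by omega⟩)

lemma bruhatLE_iff {x y : Perm (Fin n)} :
    BruhatLE x y ↔ ∀ i j : ℕ, nrank x i j ≤ nrank y i j := by
  constructor
  · intro h i j
    rcases le_or_gt n j with hj | hj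
    · rw [nrank_eq_zero_of_le x i hj]; omega
    · -- j < n
      rcases Nat.eq_zero_or_pos i with rfl | hi
      · rw [nrank_zero_left]; omega
      rcases le_or_gt i n with hin | hin
      · have := h ⟨i - 1, by omega⟩ ⟨j, hj⟩
        rw [bruhatRank_eq, bruhatRank_eq] at this
        simpa [Nat.sub_add_cancel hi] using this
      · rw [nrank_stable x hin.le, nrank_stable y hin.le]
        have hn : 1 ≤ n := by omega
        have := h ⟨n - 1, by omega⟩ ⟨j, hj⟩
        rw [bruhatRank_eq, bruhatRank_eq] at this
        simpa [Nat.sub_add_cancel hn] using this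
  · intro h i j
    rw [bruhatRank_eq, bruhatRank_eq]
    exact h _ _

/-- Coverage by the right hull of `W`, stated pointwise. -/
def CovR (W V : Perm (Fin n)) : Prop :=
  ∀ i : Fin n, (∃ a : Fin n, (a : ℕ) ≤ (i : ℕ) ∧ (V i : ℕ) ≤ (W a : ℕ)) ∧
    (∃ b : Fin n, (i : ℕ) ≤ (b : ℕ) ∧ (W b : ℕ) ≤ (V i : ℕ))

/-- Coverage by the left hull of `u`, stated pointwise. -/
def CovL (u v : Perm (Fin n)) : Prop :=
  ∀ i : Fin n, (∃ a : Fin n, (a : ℕ) ≤ (i : ℕ) ∧ (u a : ℕ) ≤ (v i : ℕ)) ∧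
    (∃ b : Fin n, (i : ℕ) ≤ (b : ℕ) ∧ (v i : ℕ) ≤ (u b : ℕ))

/-- Easy direction: Bruhat-below implies covered by the right hull. -/
lemma covR_of_bruhat {W V : Perm (Fin n)} (h : BruhatLE V W) : CovR W V := by
  rw [bruhatLE_iff] at h
  intro i
  constructor
  · -- NE condition
    have h1 : 1 ≤ nrank V ((i : ℕ) + 1) (V i : ℕ) := by
      rw [Nat.one_le_iff_ne_zero]
      unfold nrank
      rw [Ne, Finset.card_eq_zero, Finset.filter_eq_empty_iff]
      push_neg
      exact ⟨i, Finset.mem_univ i, by omega, le_refl _⟩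
    have h2 := h ((i : ℕ) + 1) (V i : ℕ)
    have h3 : 1 ≤ nrank W ((i : ℕ) + 1) (V i : ℕ) := by omega
    unfold nrank at h3
    rw [Nat.one_le_iff_ne_zero, Ne, Finset.card_eq_zero,
      Finset.filter_eq_empty_iff] at h3
    push_neg at h3
    obtain ⟨a, _, ha1, ha2⟩ := h3
    exact ⟨a, by omega, ha2⟩
  · -- SW condition
    by_contra hc
    push_neg at hc
    have hVi : (V i : ℕ) + 1 ≤ n := (V i).isLt
    have hsW : srank W (i : ℕ) ((V i : ℕ) + 1) = 0 := by
      unfold srank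
      rw [Finset.card_eq_zero, Finset.filter_eq_empty_iff]
      rintro b _ ⟨hb1, hb2⟩
      exact absurd (by omega : (W b : ℕ) ≤ (V i : ℕ)) (by have := hc b hb1; omega)
    have hsV : 1 ≤ srank V (i : ℕ) ((V i : ℕ) + 1) := by
      rw [Nat.one_le_iff_ne_zero]
      unfold srank
      rw [Ne, Finset.card_eq_zero, Finset.filter_eq_empty_iff]
      push_neg
      exact ⟨i, Finset.mem_univ i, le_refl _, by omega⟩
    have e1 := nrank_add_eq W (i := (i : ℕ)) (j := (V i : ℕ) + 1) (by omega) (by omega)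
    have e2 := nrank_add_eq V (i := (i : ℕ)) (j := (V i : ℕ) + 1) (by omega) (by omega)
    have := h (i : ℕ) ((V i : ℕ) + 1)
    omega

end SJO
namespace SJO

variable {n : ℕ}
set_option maxRecDepth 4000

lemma has4231 (W : Perm (Fin n)) (r1 r2 r3 r4 : Fin n)
    (h12 : (r1 : ℕ) < r2) (h23 : (r2 : ℕ) < r3) (h34 : (r3 : ℕ) < r4)
    (v0 : (W r4 : ℕ) < W r2) (v1 : (W r2 : ℕ) < W r3) (v2 : (W r3 : ℕ) < W r1) :
    ContainsPattern W p4231 := by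
  have e0 : ∀ h, ![r1, r2, r3, r4] (⟨0, h⟩ : Fin 4) = r1 := fun _ => rfl
  have e1 : ∀ h, ![r1, r2, r3, r4] (⟨1, h⟩ : Fin 4) = r2 := fun _ => rfl
  have e2 : ∀ h, ![r1, r2, r3, r4] (⟨2, h⟩ : Fin 4) = r3 := fun _ => rfl
  have e3 : ∀ h, ![r1, r2, r3, r4] (⟨3, h⟩ : Fin 4) = r4 := fun _ => rfl
  have q0 : ∀ h, (p4231 (⟨0, h⟩ : Fin 4) : ℕ) = 3 := fun _ => rfl
  have q1 : ∀ h, (p4231 (⟨1, h⟩ : Fin 4) : ℕ) = 1 := fun _ => rfl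
  have q2 : ∀ h, (p4231 (⟨2, h⟩ : Fin 4) : ℕ) = 2 := fun _ => rfl
  have q3 : ∀ h, (p4231 (⟨3, h⟩ : Fin 4) : ℕ) = 0 := fun _ => rfl
  refine ⟨![r1, r2, r3, r4], ?_, ?_⟩
  · intro a b hab
    rw [Fin.lt_def] at hab ⊢
    fin_cases a <;> fin_cases b <;>
      simp only [e0, e1, e2, e3, Fin.val_mk] at hab ⊢ <;> omega
  · intro a b
    rw [Fin.lt_def, Fin.lt_def]
    fin_cases a <;> fin_cases b <;>
      simp only [e0, e1, e2, e3, q0, q1, q2, q3, Fin.val_mk] <;> omega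

lemma has35142 (W : Perm (Fin n)) (r1 r2 r3 r4 r5 : Fin n)
    (h12 : (r1 : ℕ) < r2) (h23 : (r2 : ℕ) < r3) (h34 : (r3 : ℕ) < r4) (h45 : (r4 : ℕ) < r5)
    (v0 : (W r3 : ℕ) < W r5) (v1 : (W r5 : ℕ) < W r1) (v2 : (W r1 : ℕ) < W r4) (v3 : (W r4 : ℕ) < W r2) :
    ContainsPattern W p35142 := by
  have e0 : ∀ h, ![r1, r2, r3, r4, r5] (⟨0, h⟩ : Fin 5) = r1 := fun _ => rfl
  have e1 : ∀ h, ![r1, r2, r3, r4, r5] (⟨1, h⟩ : Fin 5) = r2 := fun _ => rfl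
  have e2 : ∀ h, ![r1, r2, r3, r4, r5] (⟨2, h⟩ : Fin 5) = r3 := fun _ => rfl
  have e3 : ∀ h, ![r1, r2, r3, r4, r5] (⟨3, h⟩ : Fin 5) = r4 := fun _ => rfl
  have e4 : ∀ h, ![r1, r2, r3, r4, r5] (⟨4, h⟩ : Fin 5) = r5 := fun _ => rfl
  have q0 : ∀ h, (p35142 (⟨0, h⟩ : Fin 5) : ℕ) = 2 := fun _ => rfl
  have q1 : ∀ h, (p35142 (⟨1, h⟩ : Fin 5) : ℕ) = 4 := fun _ => rfl
  have q2 : ∀ h, (p35142 (⟨2, h⟩ : Fin 5) : ℕ) = 0 := fun _ => rfl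
  have q3 : ∀ h, (p35142 (⟨3, h⟩ : Fin 5) : ℕ) = 3 := fun _ => rfl
  have q4 : ∀ h, (p35142 (⟨4, h⟩ : Fin 5) : ℕ) = 1 := fun _ => rfl
  refine ⟨![r1, r2, r3, r4, r5], ?_, ?_⟩
  · intro a b hab
    rw [Fin.lt_def] at hab ⊢
    fin_cases a <;> fin_cases b <;>
      simp only [e0, e1, e2, e3, e4, Fin.val_mk] at hab ⊢ <;> omega
  · intro a b
    rw [Fin.lt_def, Fin.lt_def]
    fin_cases a <;> fin_cases b <;>
      simp only [e0, e1, e2, e3, e4, q0, q1, q2, q3, q4, Fin.val_mk] <;> omega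

lemma has42513 (W : Perm (Fin n)) (r1 r2 r3 r4 r5 : Fin n)
    (h12 : (r1 : ℕ) < r2) (h23 : (r2 : ℕ) < r3) (h34 : (r3 : ℕ) < r4) (h45 : (r4 : ℕ) < r5)
    (v0 : (W r4 : ℕ) < W r2) (v1 : (W r2 : ℕ) < W r5) (v2 : (W r5 : ℕ) < W r1) (v3 : (W r1 : ℕ) < W r3) :
    ContainsPattern W p42513 := by
  have e0 : ∀ h, ![r1, r2, r3, r4, r5] (⟨0, h⟩ : Fin 5) = r1 := fun _ => rfl
  have e1 : ∀ h, ![r1, r2, r3, r4, r5] (⟨1, h⟩ : Fin 5) = r2 := fun _ => rfl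
  have e2 : ∀ h, ![r1, r2, r3, r4, r5] (⟨2, h⟩ : Fin 5) = r3 := fun _ => rfl
  have e3 : ∀ h, ![r1, r2, r3, r4, r5] (⟨3, h⟩ : Fin 5) = r4 := fun _ => rfl
  have e4 : ∀ h, ![r1, r2, r3, r4, r5] (⟨4, h⟩ : Fin 5) = r5 := fun _ => rfl
  have q0 : ∀ h, (p42513 (⟨0, h⟩ : Fin 5) : ℕ) = 3 := fun _ => rfl
  have q1 : ∀ h, (p42513 (⟨1, h⟩ : Fin 5) : ℕ) = 1 := fun _ => rfl
  have q2 : ∀ h, (p42513 (⟨2, h⟩ : Fin 5) : ℕ) = 4 := fun _ => rfl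
  have q3 : ∀ h, (p42513 (⟨3, h⟩ : Fin 5) : ℕ) = 0 := fun _ => rfl
  have q4 : ∀ h, (p42513 (⟨4, h⟩ : Fin 5) : ℕ) = 2 := fun _ => rfl
  refine ⟨![r1, r2, r3, r4, r5], ?_, ?_⟩
  · intro a b hab
    rw [Fin.lt_def] at hab ⊢
    fin_cases a <;> fin_cases b <;>
      simp only [e0, e1, e2, e3, e4, Fin.val_mk] at hab ⊢ <;> omega
  · intro a b
    rw [Fin.lt_def, Fin.lt_def]
    fin_cases a <;> fin_cases b <;>
      simp only [e0, e1, e2, e3, e4, q0, q1, q2, q3, q4, Fin.val_mk] <;> omega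

lemma has351624 (W : Perm (Fin n)) (r1 r2 r3 r4 r5 r6 : Fin n)
    (h12 : (r1 : ℕ) < r2) (h23 : (r2 : ℕ) < r3) (h34 : (r3 : ℕ) < r4) (h45 : (r4 : ℕ) < r5) (h56 : (r5 : ℕ) < r6)
    (v0 : (W r3 : ℕ) < W r5) (v1 : (W r5 : ℕ) < W r1) (v2 : (W r1 : ℕ) < W r6) (v3 : (W r6 : ℕ) < W r2) (v4 : (W r2 : ℕ) < W r4) :
    ContainsPattern W p351624 := by
  have e0 : ∀ h, ![r1, r2, r3, r4, r5, r6] (⟨0, h⟩ : Fin 6) = r1 := fun _ => rfl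
  have e1 : ∀ h, ![r1, r2, r3, r4, r5, r6] (⟨1, h⟩ : Fin 6) = r2 := fun _ => rfl
  have e2 : ∀ h, ![r1, r2, r3, r4, r5, r6] (⟨2, h⟩ : Fin 6) = r3 := fun _ => rfl
  have e3 : ∀ h, ![r1, r2, r3, r4, r5, r6] (⟨3, h⟩ : Fin 6) = r4 := fun _ => rfl
  have e4 : ∀ h, ![r1, r2, r3, r4, r5, r6] (⟨4, h⟩ : Fin 6) = r5 := fun _ => rfl
  have e5 : ∀ h, ![r1, r2, r3, r4, r5, r6] (⟨5, h⟩ : Fin 6) = r6 := fun _ => rfl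
  have q0 : ∀ h, (p351624 (⟨0, h⟩ : Fin 6) : ℕ) = 2 := fun _ => rfl
  have q1 : ∀ h, (p351624 (⟨1, h⟩ : Fin 6) : ℕ) = 4 := fun _ => rfl
  have q2 : ∀ h, (p351624 (⟨2, h⟩ : Fin 6) : ℕ) = 0 := fun _ => rfl
  have q3 : ∀ h, (p351624 (⟨3, h⟩ : Fin 6) : ℕ) = 5 := fun _ => rfl
  have q4 : ∀ h, (p351624 (⟨4, h⟩ : Fin 6) : ℕ) = 1 := fun _ => rfl
  have q5 : ∀ h, (p351624 (⟨5, h⟩ : Fin 6) : ℕ) = 3 := fun _ => rfl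
  refine ⟨![r1, r2, r3, r4, r5, r6], ?_, ?_⟩
  · intro a b hab
    rw [Fin.lt_def] at hab ⊢
    fin_cases a <;> fin_cases b <;>
      simp only [e0, e1, e2, e3, e4, e5, Fin.val_mk] at hab ⊢ <;> omega
  · intro a b
    rw [Fin.lt_def, Fin.lt_def]
    fin_cases a <;> fin_cases b <;>
      simp only [e0, e1, e2, e3, e4, e5, q0, q1, q2, q3, q4, q5, Fin.val_mk] <;> omega

end SJO
namespace SJO

variable {n : ℕ}

/-- The Gasharov–Reiner corner configuration forces one of the four patterns. -/
lemma corner_impossible (W : Perm (Fin n)) (hW : AvoidsThePatterns W)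
    (i j : ℕ) (hi1 : 1 ≤ i) (hj1 : 1 ≤ j)
    (I1 I : Fin n) (hI1 : (I1 : ℕ) = i - 1) (hI : (I : ℕ) = i)
    (hp : (W I1 : ℕ) < j) (hq : j ≤ (W I : ℕ))
    (d : Fin n) (hdv : (W d : ℕ) = j) (hd : i ≤ (d : ℕ))
    (e : Fin n) (hev : (W e : ℕ) = j - 1) (he : (e : ℕ) < i)
    (a : Fin n) (ha : (a : ℕ) < i) (haj : j < (W a : ℕ))
    (s : Fin n) (hs : i < (s : ℕ)) (hsv : (W s : ℕ) + 1 < j) : False := by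
  have haI1 : (a : ℕ) < i - 1 := by
    have : (W a : ℕ) ≠ (W I1 : ℕ) := fun h => by
      have : a = I1 := W.injective (Fin.ext h)
      omega
    have : (a : ℕ) ≠ (I1 : ℕ) := fun h => by
      have : a = I1 := Fin.ext h
      subst this; omega
    omega
  have haI : (W a : ℕ) ≠ (W I : ℕ) := fun h => by
    have : a = I := W.injective (Fin.ext h)
    subst this; omega
  by_cases hB : ∃ t : Fin n, i ≤ (t : ℕ) ∧ (W t : ℕ) < (W I1 : ℕ)
  · obtain ⟨t, ht, htv⟩ := hB
    have htI : i < (t : ℕ) := by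
      have : (t : ℕ) ≠ (I : ℕ) := fun h => by
        have : t = I := Fin.ext h
        subst this; omega
      omega
    rcases lt_or_ge (d : ℕ) (t : ℕ) with hdt | htd
    · exact hW.1 (has4231 W a I1 d t (by omega) (by omega) (by omega)
        (by omega) (by omega) (by omega))
    · have htd' : (t : ℕ) < (d : ℕ) := by
        have : (t : ℕ) ≠ (d : ℕ) := fun h => by
          have : t = d := Fin.ext h
          subst this; omega
        omega
      rcases lt_or_ge (W I : ℕ) (W a : ℕ) with hqa | haq
      · exact hW.1 (has4231 W a I1 I t (by omega) (by omega) (by omega)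
          (by omega) (by omega) (by omega))
      · exact hW.2.2.1 (has42513 W a I1 I t d (by omega) (by omega) (by omega)
          (by omega) (by omega) (by omega) (by omega) (by omega))
  · push_neg at hB
    have hps : (W I1 : ℕ) < (W s : ℕ) := by
      have h1 := hB s (by omega)
      have : (W s : ℕ) ≠ (W I1 : ℕ) := fun h => by
        have : s = I1 := W.injective (Fin.ext h)
        subst this; omega
      omega
    have hsd : (s : ℕ) ≠ (d : ℕ) := fun h => by
      have : s = d := Fin.ext h
      subst this; omega
    rcases lt_or_ge (e : ℕ) (a : ℕ) with hea | hae
    · rcases lt_or_ge (d : ℕ) (s : ℕ) with hds | hsd'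
      · exact hW.2.1 (has35142 W e a I1 d s (by omega) (by omega) (by omega)
          (by omega) (by omega) (by omega) (by omega) (by omega))
      · rcases lt_or_ge (W I : ℕ) (W a : ℕ) with hqa | haq
        · exact hW.2.1 (has35142 W e a I1 I s (by omega) (by omega) (by omega)
            (by omega) (by omega) (by omega) (by omega) (by omega))
        · exact hW.2.2.2 (has351624 W e a I1 I s d (by omega) (by omega) (by omega)
            (by omega) (by omega) (by omega) (by omega) (by omega) (by omega) (by omega))
    · have hae' : (a : ℕ) < (e : ℕ) := by
        have : (a : ℕ) ≠ (e : ℕ) := fun h => by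
          have : a = e := Fin.ext h
          subst this; omega
        omega
      rcases lt_or_ge (d : ℕ) (s : ℕ) with hds | hsd'
      · exact hW.1 (has4231 W a e d s (by omega) (by omega) (by omega)
          (by omega) (by omega) (by omega))
      · rcases lt_or_ge (W I : ℕ) (W a : ℕ) with hqa | haq
        · exact hW.1 (has4231 W a e I s (by omega) (by omega) (by omega)
            (by omega) (by omega) (by omega))
        · exact hW.2.2.1 (has42513 W a e I s d (by omega) (by omega) (by omega)
            (by omega) (by omega) (by omega) (by omega) (by omega))

end SJO
namespace SJO

variable {n : ℕ}

lemma srank_zero_col (π : Perm (Fin n)) (i : ℕ) : srank π i 0 = 0 := by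
  unfold srank
  rw [Finset.card_eq_zero, Finset.filter_eq_empty_iff]
  intro b _
  omega

lemma srank_zero_row (π : Perm (Fin n)) {i : ℕ} (hi : n ≤ i) (j : ℕ) : srank π i j = 0 := by
  unfold srank
  rw [Finset.card_eq_zero, Finset.filter_eq_empty_iff]
  intro b _
  have := b.isLt
  omega

/-- The hard direction: coverage by the right hull implies Bruhat-below,
given pattern avoidance. -/
lemma bruhat_of_covR {W V : Perm (Fin n)} (hW : AvoidsThePatterns W) (hc : CovR W V) :
    BruhatLE V W := by
  rw [bruhatLE_iff]
  suffices H : ∀ m i j, i ≤ n → j ≤ n →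
      nrank W i j * (2 * n + 1) + (n - i) + j ≤ m → nrank V i j ≤ nrank W i j by
    intro i j
    rcases le_or_gt n j with hj | hj
    · rw [nrank_eq_zero_of_le V i hj]; omega
    rcases le_or_gt i n with hi | hi
    · exact H _ i j hi hj.le le_rfl
    · rw [nrank_stable V hi.le, nrank_stable W hi.le]
      exact H _ n j le_rfl hj.le le_rfl
  intro m
  induction m using Nat.strong_induction_on with
  | _ m IH =>
  intro i j hi hj hm
  by_cases h0 : nrank W i j = 0
  · have : nrank V i j = 0 := by
      unfold nrank at h0 ⊢
      rw [Finset.card_eq_zero, Finset.filter_eq_empty_iff] at h0 ⊢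
      rintro x _ ⟨hx, hjx⟩
      obtain ⟨a', ha', hv⟩ := (hc x).1
      exact h0 (Finset.mem_univ a') ⟨by omega, by omega⟩
    omega
  by_cases hs0 : srank W i j = 0
  · have hsV : srank V i j = 0 := by
      unfold srank at hs0 ⊢
      rw [Finset.card_eq_zero, Finset.filter_eq_empty_iff] at hs0 ⊢
      rintro b _ ⟨hb, hbj⟩
      obtain ⟨b', hb', hv⟩ := (hc b).2
      exact hs0 (Finset.mem_univ b') ⟨by omega, by omega⟩
    have e1 := nrank_add_eq V hi hj
    have e2 := nrank_add_eq W hi hj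
    omega
  by_cases hfi : nrank W i j = i
  · have := nrank_le_rows V hi j; omega
  by_cases hfj : nrank W i j = n - j
  · have := nrank_le_cols V i hj; omega
  -- basic bounds
  have hi1 : 1 ≤ i := by
    rcases Nat.eq_zero_or_pos i with rfl | h
    · rw [nrank_zero_left] at h0; omega
    · exact h
  have hj1 : 1 ≤ j := by
    rcases Nat.eq_zero_or_pos j with rfl | h
    · have := nrank_add_eq W hi (Nat.zero_le n)
      rw [srank_zero_col] at this
      omega
    · exact h
  have hin : i < n := by
    rcases lt_or_eq_of_le hi with h | rfl
    · exact h
    · rw [srank_zero_row W le_rfl] at hs0; omega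
  have hjn : j < n := by
    rcases lt_or_eq_of_le hj with h | rfl
    · exact h
    · rw [nrank_eq_zero_of_le W i le_rfl] at h0; omega
  obtain ⟨r', hr'⟩ : ∃ r', nrank W i j = r' + 1 := ⟨nrank W i j - 1, by omega⟩
  have Emul : (r' + 1) * (2 * n + 1) = r' * (2 * n + 1) + (2 * n + 1) :=
    Nat.succ_mul _ _
  have him : i - 1 + 1 = i := by omega
  have hjm : j - 1 + 1 = j := by omega
  -- case (a): the rook in row i-1 is in the NE zone
  by_cases hca : j ≤ (W ⟨i - 1, by omega⟩ : ℕ)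
  · have e1 : nrank W i j = nrank W (i - 1) j + 1 := by
      have := nrank_row_succ W (i := i - 1) (j := j) (by omega) hca
      rwa [him] at this
    have e2 : nrank V i j ≤ nrank V (i - 1) j + 1 := by
      have := nrank_row_le V (i - 1) j
      rwa [him] at this
    have hrec := IH (nrank W (i - 1) j * (2 * n + 1) + (n - (i - 1)) + j)
      (by have h1 : nrank W (i - 1) j = r' := by omega
          rw [h1]; rw [hr', Emul] at hm; omega)
      (i - 1) j (by omega) hj le_rfl
    omega
  -- case (b): the rook of column j is in the NW zone
  by_cases hcb : (W.symm ⟨j, hjn⟩ : ℕ) < i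
  · have e1 : nrank W i j = nrank W i (j + 1) + 1 := by
      apply nrank_col_succ W (W.symm ⟨j, hjn⟩) hcb
      rw [Equiv.apply_symm_apply]
    have e2 : nrank V i j ≤ nrank V i (j + 1) + 1 := nrank_col_le V i j
    have hrec := IH (nrank W i (j + 1) * (2 * n + 1) + (n - i) + (j + 1))
      (by have h1 : nrank W i (j + 1) = r' := by omega
          rw [h1]; rw [hr', Emul] at hm; omega)
      i (j + 1) hi (by omega) le_rfl
    omega
  -- case (c): the rook in row i is in the SW zone
  by_cases hcc : (W ⟨i, hin⟩ : ℕ) < j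
  · have e1 : nrank W (i + 1) j = nrank W i j := nrank_row_eq W hin hcc
    have e2 : nrank V i j ≤ nrank V (i + 1) j := nrank_mono_row V (by omega) j
    have hrec := IH (nrank W (i + 1) j * (2 * n + 1) + (n - (i + 1)) + j)
      (by rw [e1]; omega) (i + 1) j (by omega) hj le_rfl
    omega
  -- case (d): the rook of column j-1 is in the SE zone
  by_cases hcd : i ≤ (W.symm ⟨j - 1, by omega⟩ : ℕ)
  · have e1 : nrank W i (j - 1) = nrank W i j := by
      have key : ∀ x : Fin n, (x : ℕ) < i → (W x : ℕ) ≠ j - 1 := by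
        intro x hx hv
        have : x = W.symm ⟨j - 1, by omega⟩ := by
          apply_fun W
          rw [Equiv.apply_symm_apply]
          exact Fin.ext hv
        rw [this] at hx
        omega
      have := nrank_col_eq W (i := i) (j := j - 1) key
      rwa [hjm] at this
    have e2 : nrank V i j ≤ nrank V i (j - 1) := nrank_anti_col V i (by omega)
    have hrec := IH (nrank W i (j - 1) * (2 * n + 1) + (n - i) + (j - 1))
      (by rw [e1]; omega) i (j - 1) hi (by omega) le_rfl
    omega
  -- case (e): impossible corner
  exfalso
  push_neg at hca hcb hcc hcd
  -- NE rook
  have hNE : ∃ x : Fin n, (x : ℕ) < i ∧ j < (W x : ℕ) := by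
    have : (Finset.univ.filter fun a : Fin n => (a : ℕ) < i ∧ j ≤ (W a : ℕ)).Nonempty := by
      rw [← Finset.card_pos]
      have : nrank W i j ≠ 0 := h0
      unfold nrank at this
      omega
    obtain ⟨x, hx⟩ := this
    rw [Finset.mem_filter] at hx
    refine ⟨x, hx.2.1, ?_⟩
    rcases lt_or_eq_of_le hx.2.2 with h | h
    · exact h
    · exfalso
      have : x = W.symm ⟨j, hjn⟩ := by
        apply_fun W
        rw [Equiv.apply_symm_apply]
        exact Fin.ext h.symm
      rw [this] at hx
      omega
  -- SW rook
  have hSW : ∃ x : Fin n, i < (x : ℕ) ∧ (W x : ℕ) + 1 < j := by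
    have : (Finset.univ.filter fun b : Fin n => i ≤ (b : ℕ) ∧ (W b : ℕ) < j).Nonempty := by
      rw [← Finset.card_pos]
      have : srank W i j ≠ 0 := hs0
      unfold srank at this
      omega
    obtain ⟨x, hx⟩ := this
    rw [Finset.mem_filter] at hx
    have hx1 : i < (x : ℕ) := by
      rcases lt_or_eq_of_le hx.2.1 with h | h
      · exact h
      · exfalso
        have : x = ⟨i, hin⟩ := Fin.ext h.symm
        rw [this] at hx
        omega
    refine ⟨x, hx1, ?_⟩
    have : (W x : ℕ) ≠ j - 1 := by
      intro hv
      have : x = W.symm ⟨j - 1, by omega⟩ := by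
        apply_fun W
        rw [Equiv.apply_symm_apply]
        exact Fin.ext hv
      rw [this] at hx1
      omega
    omega
  obtain ⟨a, ha, haj⟩ := hNE
  obtain ⟨s, hs, hsv⟩ := hSW
  exact corner_impossible W hW i j hi1 hj1 ⟨i - 1, by omega⟩ ⟨i, hin⟩ rfl rfl
    hca hcc (W.symm ⟨j, hjn⟩) (by rw [Equiv.apply_symm_apply]) hcb
    (W.symm ⟨j - 1, by omega⟩) (by rw [Equiv.apply_symm_apply]) hcd
    a ha haj s hs hsv

/-- Main equivalence at the right-hull side. -/
lemma covR_iff_bruhat {W V : Perm (Fin n)} (hW : AvoidsThePatterns W) :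
    CovR W V ↔ BruhatLE V W :=
  ⟨bruhat_of_covR hW, covR_of_bruhat⟩

end SJO
namespace SJO

variable {n : ℕ}

/-- Row-reversal `π^↕`. -/
def flip (π : Perm (Fin n)) : Perm (Fin n) := Fin.revPerm.trans π

lemma flip_apply (π : Perm (Fin n)) (i : Fin n) : flip π i = π i.rev := rfl

lemma flip_flip (π : Perm (Fin n)) : flip (flip π) = π := by
  ext i
  simp [flip]

lemma card_pi_ge (π : Perm (Fin n)) {j : ℕ} (hj : j ≤ n) :
    (Finset.univ.filter fun a : Fin n => j ≤ (π a : ℕ)).card = n - j := by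
  have key := Finset.card_filter_add_card_filter_not
    (s := (Finset.univ : Finset (Fin n))) (p := fun a : Fin n => (π a : ℕ) < j)
  rw [card_pi_lt π hj, Finset.card_univ, Fintype.card_fin] at key
  have e : (Finset.univ.filter fun a : Fin n => ¬ (π a : ℕ) < j)
      = (Finset.univ.filter fun a : Fin n => j ≤ (π a : ℕ)) :=
    Finset.filter_congr (fun a _ => by simp only [not_lt])
  rw [e] at key
  omega

lemma nrank_flip (π : Perm (Fin n)) {i j : ℕ} (hi : i ≤ n) (hj : j ≤ n) :
    nrank (flip π) i j + nrank π (n - i) j = n - j := by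
  have step1 : nrank (flip π) i j
      = (Finset.univ.filter fun b : Fin n => n - i ≤ (b : ℕ) ∧ j ≤ (π b : ℕ)).card := by
    unfold nrank
    apply Finset.card_bij' (i := fun (a : Fin n) _ => a.rev) (j := fun (b : Fin n) _ => b.rev)
    · intro a ha
      simp only [Finset.mem_filter, Finset.mem_univ, true_and] at ha ⊢
      have hv := a.isLt
      rw [Fin.val_rev]
      refine ⟨by omega, ?_⟩
      have : flip π a = π a.rev := rfl
      rw [← this]
      exact ha.2
    · intro b hb
      simp only [Finset.mem_filter, Finset.mem_univ, true_and] at hb ⊢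
      have hv := b.isLt
      rw [Fin.val_rev]
      refine ⟨by omega, ?_⟩
      rw [flip_apply, Fin.rev_rev]
      exact hb.2
    · intro a _; exact Fin.rev_rev a
    · intro b _; exact Fin.rev_rev b
  have step2 := Finset.card_filter_add_card_filter_not
    (s := Finset.univ.filter fun b : Fin n => j ≤ (π b : ℕ))
    (p := fun b : Fin n => (b : ℕ) < n - i)
  rw [Finset.filter_filter, Finset.filter_filter, card_pi_ge π hj] at step2
  have e1 : (Finset.univ.filter fun b : Fin n => j ≤ (π b : ℕ) ∧ (b : ℕ) < n - i)
      = (Finset.univ.filter fun b : Fin n => (b : ℕ) < n - i ∧ j ≤ (π b : ℕ)) :=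
    Finset.filter_congr (fun b _ => and_comm)
  have e2 : (Finset.univ.filter fun b : Fin n => j ≤ (π b : ℕ) ∧ ¬ (b : ℕ) < n - i)
      = (Finset.univ.filter fun b : Fin n => n - i ≤ (b : ℕ) ∧ j ≤ (π b : ℕ)) := by
    apply Finset.filter_congr
    intro b _
    constructor
    · rintro ⟨x, y⟩; exact ⟨by omega, x⟩
    · rintro ⟨x, y⟩; exact ⟨y, by omega⟩
  rw [e1, e2] at step2
  rw [step1]
  unfold nrank
  omega

lemma bruhatLE_flip_mp {u v : Perm (Fin n)} (h : BruhatLE u v) :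
    BruhatLE (flip v) (flip u) := by
  rw [bruhatLE_iff] at h ⊢
  intro i j
  rcases le_or_gt n j with hj | hj
  · rw [nrank_eq_zero_of_le (flip v) i hj]; omega
  rcases le_or_gt i n with hi | hi
  · have e1 := nrank_flip v hi hj.le
    have e2 := nrank_flip u hi hj.le
    have := h (n - i) j
    omega
  · rw [nrank_stable (flip v) hi.le, nrank_stable (flip u) hi.le]
    have e1 := nrank_flip v le_rfl hj.le
    have e2 := nrank_flip u le_rfl hj.le
    have := h (n - n) j
    omega

lemma bruhatLE_flip {u v : Perm (Fin n)} :
    BruhatLE u v ↔ BruhatLE (flip v) (flip u) := by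
  constructor
  · exact bruhatLE_flip_mp
  · intro h
    have := bruhatLE_flip_mp h
    rwa [flip_flip, flip_flip] at this

lemma covL_iff_covR_flip {u v : Perm (Fin n)} :
    CovL u v ↔ CovR (flip u) (flip v) := by
  constructor
  · intro h i
    obtain ⟨⟨a, ha, hv⟩, ⟨b, hb, hv'⟩⟩ := h i.rev
    have hiv := i.isLt
    have hav := a.isLt
    have hbv := b.isLt
    constructor
    · refine ⟨b.rev, ?_, ?_⟩
      · rw [Fin.val_rev]
        rw [Fin.val_rev] at hb
        omega
      · rw [flip_apply, flip_apply, Fin.rev_rev]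
        exact hv'
    · refine ⟨a.rev, ?_, ?_⟩
      · rw [Fin.val_rev]
        rw [Fin.val_rev] at ha
        omega
      · rw [flip_apply, flip_apply, Fin.rev_rev]
        exact hv
  · intro h i
    obtain ⟨⟨a, ha, hv⟩, ⟨b, hb, hv'⟩⟩ := h i.rev
    have hiv := i.isLt
    have hav := a.isLt
    have hbv := b.isLt
    rw [flip_apply, flip_apply, Fin.rev_rev] at hv hv'
    constructor
    · refine ⟨b.rev, ?_, ?_⟩
      · rw [Fin.val_rev]
        rw [Fin.val_rev] at hb
        omega
      · exact hv'
    · refine ⟨a.rev, ?_, ?_⟩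
      · rw [Fin.val_rev]
        rw [Fin.val_rev] at ha
        omega
      · exact hv

/-- Main equivalence at the left-hull side. -/
lemma covL_iff_bruhat {u v : Perm (Fin n)} (hu : AvoidsThePatterns (flip u)) :
    CovL u v ↔ BruhatLE u v := by
  rw [covL_iff_covR_flip, covR_iff_bruhat hu, ← bruhatLE_flip]

end SJO
namespace SJO

variable {n : ℕ}

lemma mem_grid {c : ℕ × ℕ} : c ∈ grid n n ↔ c.1 < n ∧ c.2 < n := by
  unfold grid
  rw [Finset.mem_product, Finset.mem_range, Finset.mem_range]

/-- The explicit right hull. -/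
def rightExplicit (w : Perm (Fin n)) : Board :=
  (grid n n).filter fun c =>
    (∃ a : Fin n, (a : ℕ) ≤ c.1 ∧ c.2 ≤ (w a : ℕ)) ∧
    (∃ b : Fin n, c.1 ≤ (b : ℕ) ∧ (w b : ℕ) ≤ c.2)

/-- The explicit left hull. -/
def leftExplicit (u : Perm (Fin n)) : Board :=
  (grid n n).filter fun c =>
    (∃ a : Fin n, (a : ℕ) ≤ c.1 ∧ (u a : ℕ) ≤ c.2) ∧
    (∃ b : Fin n, c.1 ≤ (b : ℕ) ∧ c.2 ≤ (u b : ℕ))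

lemma rightExplicit_skew (w : Perm (Fin n)) : IsRightSkewFerrers n (rightExplicit w) := by
  refine ⟨(grid n n).filter fun c => ∃ b : Fin n, c.1 ≤ (b : ℕ) ∧ (w b : ℕ) ≤ c.2,
    (grid n n).filter fun c => ¬ ∃ a : Fin n, (a : ℕ) ≤ c.1 ∧ c.2 ≤ (w a : ℕ),
    ⟨Finset.filter_subset _ _, ?_⟩, ⟨Finset.filter_subset _ _, ?_⟩, ?_, ?_⟩
  · intro i j i' j' hij hi hj hj'
    rw [Finset.mem_filter, mem_grid] at hij ⊢
    obtain ⟨⟨h1, h2⟩, b, hb1, hb2⟩ := hij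
    exact ⟨⟨by omega, hj'⟩, b, by omega, by omega⟩
  · intro i j i' j' hij hi hj hj'
    rw [Finset.mem_filter, mem_grid] at hij ⊢
    obtain ⟨⟨h1, h2⟩, hno⟩ := hij
    push_neg at hno ⊢
    exact ⟨⟨by omega, hj'⟩, fun a ha => by have := hno a (by omega); omega⟩
  · intro c hc
    rw [Finset.mem_filter, mem_grid] at hc ⊢
    obtain ⟨⟨h1, h2⟩, hno⟩ := hc
    push_neg at hno
    refine ⟨⟨h1, h2⟩, ⟨c.1, by omega⟩, by simp, ?_⟩
    have := hno ⟨c.1, by omega⟩ (by simp)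
    simp at this ⊢
    omega
  · ext c
    rw [Finset.mem_sdiff, Finset.mem_filter, Finset.mem_filter]
    rw [rightExplicit, Finset.mem_filter]
    constructor
    · rintro ⟨hg, hA, hB⟩
      exact ⟨⟨hg, hB⟩, fun hx => hx.2 hA⟩
    · rintro ⟨⟨hg, hB⟩, hn⟩
      refine ⟨hg, ?_, hB⟩
      by_contra hx
      exact hn ⟨hg, hx⟩

lemma leftExplicit_skew (u : Perm (Fin n)) : IsLeftSkewFerrers n (leftExplicit u) := by
  refine ⟨(grid n n).filter fun c => ∃ b : Fin n, c.1 ≤ (b : ℕ) ∧ c.2 ≤ (u b : ℕ),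
    (grid n n).filter fun c => ¬ ∃ a : Fin n, (a : ℕ) ≤ c.1 ∧ (u a : ℕ) ≤ c.2,
    ⟨Finset.filter_subset _ _, ?_⟩, ⟨Finset.filter_subset _ _, ?_⟩, ?_, ?_⟩
  · intro i j i' j' hij hi hj
    rw [Finset.mem_filter, mem_grid] at hij ⊢
    obtain ⟨⟨h1, h2⟩, b, hb1, hb2⟩ := hij
    exact ⟨⟨by omega, by omega⟩, b, by omega, by omega⟩
  · intro i j i' j' hij hi hj
    rw [Finset.mem_filter, mem_grid] at hij ⊢
    obtain ⟨⟨h1, h2⟩, hno⟩ := hij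
    push_neg at hno ⊢
    exact ⟨⟨by omega, by omega⟩, fun a ha => by have := hno a (by omega); omega⟩
  · intro c hc
    rw [Finset.mem_filter, mem_grid] at hc ⊢
    obtain ⟨⟨h1, h2⟩, hno⟩ := hc
    push_neg at hno
    refine ⟨⟨h1, h2⟩, ⟨c.1, by omega⟩, by simp, ?_⟩
    have := hno ⟨c.1, by omega⟩ (by simp)
    simp at this ⊢
    omega
  · ext c
    rw [Finset.mem_sdiff, Finset.mem_filter, Finset.mem_filter]
    rw [leftExplicit, Finset.mem_filter]
    constructor
    · rintro ⟨hg, hA, hB⟩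
      exact ⟨⟨hg, hB⟩, fun hx => hx.2 hA⟩
    · rintro ⟨⟨hg, hB⟩, hn⟩
      refine ⟨hg, ?_, hB⟩
      by_contra hx
      exact hn ⟨hg, hx⟩

lemma rightExplicit_covers (w : Perm (Fin n)) : Covers (rightExplicit w) w := by
  intro i
  rw [rightExplicit, Finset.mem_filter, mem_grid]
  exact ⟨⟨i.isLt, (w i).isLt⟩, ⟨i, le_rfl, le_rfl⟩, ⟨i, le_rfl, le_rfl⟩⟩

lemma leftExplicit_covers (u : Perm (Fin n)) : Covers (leftExplicit u) u := by
  intro i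
  rw [leftExplicit, Finset.mem_filter, mem_grid]
  exact ⟨⟨i.isLt, (u i).isLt⟩, ⟨i, le_rfl, le_rfl⟩, ⟨i, le_rfl, le_rfl⟩⟩

lemma rightExplicit_min (w : Perm (Fin n)) (B : Board)
    (hB : IsRightSkewFerrers n B) (hc : Covers B w) : rightExplicit w ⊆ B := by
  obtain ⟨L, M, hL, hM, hML, rfl⟩ := hB
  intro c hcm
  rw [rightExplicit, Finset.mem_filter, mem_grid] at hcm
  obtain ⟨⟨h1, h2⟩, ⟨a, ha1, ha2⟩, ⟨b, hb1, hb2⟩⟩ := hcm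
  rw [Finset.mem_sdiff]
  constructor
  · have hbL : ((b : ℕ), (w b : ℕ)) ∈ L := (Finset.mem_sdiff.mp (hc b)).1
    have := hL.2 (b : ℕ) (w b : ℕ) c.1 c.2 hbL hb1 hb2 h2
    rwa [Prod.mk.eta] at this
  · intro hcM
    have : ((a : ℕ), (w a : ℕ)) ∈ M := by
      apply hM.2 c.1 c.2 (a : ℕ) (w a : ℕ) _ ha1 ha2 (w a).isLt
      rwa [Prod.mk.eta]
    exact (Finset.mem_sdiff.mp (hc a)).2 this

lemma leftExplicit_min (u : Perm (Fin n)) (B : Board)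
    (hB : IsLeftSkewFerrers n B) (hc : Covers B u) : leftExplicit u ⊆ B := by
  obtain ⟨L, M, hL, hM, hML, rfl⟩ := hB
  intro c hcm
  rw [leftExplicit, Finset.mem_filter, mem_grid] at hcm
  obtain ⟨⟨h1, h2⟩, ⟨a, ha1, ha2⟩, ⟨b, hb1, hb2⟩⟩ := hcm
  rw [Finset.mem_sdiff]
  constructor
  · have hbL : ((b : ℕ), (u b : ℕ)) ∈ L := (Finset.mem_sdiff.mp (hc b)).1
    have := hL.2 (b : ℕ) (u b : ℕ) c.1 c.2 hbL hb1 hb2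
    rwa [Prod.mk.eta] at this
  · intro hcM
    have : ((a : ℕ), (u a : ℕ)) ∈ M := by
      apply hM.2 c.1 c.2 (a : ℕ) (u a : ℕ) _ ha1 ha2
      rwa [Prod.mk.eta]
    exact (Finset.mem_sdiff.mp (hc a)).2 this

lemma rightHull_eq {w : Perm (Fin n)} {HR : Board} (h : IsRightHull w HR) :
    HR = rightExplicit w :=
  Finset.Subset.antisymm (h.2.2 _ (rightExplicit_skew w) (rightExplicit_covers w))
    (rightExplicit_min w HR h.1 h.2.1)

lemma leftHull_eq {u : Perm (Fin n)} {HL : Board} (h : IsLeftHull u HL) :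
    HL = leftExplicit u :=
  Finset.Subset.antisymm (h.2.2 _ (leftExplicit_skew u) (leftExplicit_covers u))
    (leftExplicit_min u HL h.1 h.2.1)

lemma covers_rightExplicit_iff {w v : Perm (Fin n)} :
    Covers (rightExplicit w) v ↔ CovR w v := by
  unfold Covers CovR rightExplicit
  apply forall_congr'
  intro i
  rw [Finset.mem_filter, mem_grid]
  constructor
  · rintro ⟨_, h⟩; exact h
  · intro h; exact ⟨⟨i.isLt, (v i).isLt⟩, h⟩

lemma covers_leftExplicit_iff {u v : Perm (Fin n)} :
    Covers (leftExplicit u) v ↔ CovL u v := by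
  unfold Covers CovL leftExplicit
  apply forall_congr'
  intro i
  rw [Finset.mem_filter, mem_grid]
  constructor
  · rintro ⟨_, h⟩; exact h
  · intro h; exact ⟨⟨i.isLt, (v i).isLt⟩, h⟩

end SJO
namespace SJO

variable {n : ℕ}

/-- The rook diagram (graph) of a permutation. -/
def pgraph (v : Perm (Fin n)) : Board :=
  Finset.univ.image fun i : Fin n => ((i : ℕ), (v i : ℕ))

lemma mem_pgraph {v : Perm (Fin n)} {c : ℕ × ℕ} :
    c ∈ pgraph v ↔ ∃ i : Fin n, ((i : ℕ), (v i : ℕ)) = c := by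
  unfold pgraph
  rw [Finset.mem_image]
  constructor
  · rintro ⟨i, _, h⟩; exact ⟨i, h⟩
  · rintro ⟨i, h⟩; exact ⟨i, Finset.mem_univ i, h⟩

lemma covers_iff_pgraph_subset {A : Board} {v : Perm (Fin n)} :
    Covers A v ↔ pgraph v ⊆ A := by
  constructor
  · intro h c hc
    obtain ⟨i, rfl⟩ := mem_pgraph.mp hc
    exact h i
  · intro h i
    exact h (mem_pgraph.mpr ⟨i, rfl⟩)

lemma pgraph_inj {v v' : Perm (Fin n)} (h : pgraph v = pgraph v') : v = v' := by
  ext i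
  have : ((i : ℕ), (v i : ℕ)) ∈ pgraph v' := by
    rw [← h]; exact mem_pgraph.mpr ⟨i, rfl⟩
  obtain ⟨i', hi'⟩ := mem_pgraph.mp this
  rw [Prod.mk.injEq] at hi'
  have : i' = i := Fin.ext hi'.1
  subst this
  omega

lemma card_pgraph (v : Perm (Fin n)) : (pgraph v).card = n := by
  unfold pgraph
  rw [Finset.card_image_of_injective _ (fun i i' h => by
    rw [Prod.mk.injEq] at h
    exact Fin.ext h.1)]
  simp

lemma invStat_pgraph (v : Perm (Fin n)) : invStat n n (pgraph v) = inversions v := by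
  rcases Nat.eq_zero_or_pos n with rfl | hn
  · unfold invStat inversions
    rw [show grid 0 0 = ∅ from rfl]
    simp
  unfold invStat inversions
  apply Finset.card_bij'
    (i := fun c _ => ((v.symm ⟨c.2 % n, Nat.mod_lt _ hn⟩ : Fin n),
      (⟨c.1 % n, Nat.mod_lt _ hn⟩ : Fin n)))
    (j := fun p _ => (((p.2 : Fin n) : ℕ), (v p.1 : ℕ)))
  · -- maps into inversions
    intro c hc
    rw [Finset.mem_filter, mem_grid] at hc
    obtain ⟨⟨h1, h2⟩, hrow, hcol⟩ := hc
    have e1 : c.1 % n = c.1 := Nat.mod_eq_of_lt h1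
    have e2 : c.2 % n = c.2 := Nat.mod_eq_of_lt h2
    have hr := hrow ((⟨c.1 % n, Nat.mod_lt _ hn⟩ : Fin n), (v ⟨c.1 % n, Nat.mod_lt _ hn⟩ : ℕ))
      (mem_pgraph.mpr ⟨_, rfl⟩) (by simp [e1])
    have hcl := hcol (((v.symm ⟨c.2 % n, Nat.mod_lt _ hn⟩ : Fin n) : ℕ),
        (v (v.symm ⟨c.2 % n, Nat.mod_lt _ hn⟩) : ℕ))
      (mem_pgraph.mpr ⟨_, rfl⟩) (by simp [e2])
    rw [Finset.mem_filter]
    refine ⟨Finset.mem_univ _, ?_, ?_⟩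
    · rw [Fin.lt_def]
      simp only [Fin.val_mk] at hcl ⊢
      omega
    · rw [Fin.lt_def]
      simp only [Equiv.apply_symm_apply, Fin.val_mk] at hr ⊢
      omega
  · -- maps into grid filter
    intro p hp
    rw [Finset.mem_filter] at hp
    obtain ⟨-, hlt, hvlt⟩ := hp
    rw [Fin.lt_def] at hlt hvlt
    rw [Finset.mem_filter, mem_grid]
    refine ⟨⟨(p.2).isLt, (v p.1).isLt⟩, ?_, ?_⟩
    · rintro cc hcc hcc1
      obtain ⟨x, rfl⟩ := mem_pgraph.mp hcc
      simp only at hcc1 ⊢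
      have : x = p.2 := Fin.ext hcc1
      subst this
      exact hvlt
    · rintro cc hcc hcc2
      obtain ⟨x, rfl⟩ := mem_pgraph.mp hcc
      simp only at hcc2 ⊢
      have : x = p.1 := by
        apply v.injective
        exact Fin.ext hcc2
      subst this
      exact hlt
  · -- left inverse
    intro c hc
    rw [Finset.mem_filter, mem_grid] at hc
    obtain ⟨⟨h1, h2⟩, -, -⟩ := hc
    have e1 : c.1 % n = c.1 := Nat.mod_eq_of_lt h1
    have e2 : c.2 % n = c.2 := Nat.mod_eq_of_lt h2
    simp only [Equiv.apply_symm_apply, Fin.val_mk, e1, e2]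
  · -- right inverse
    intro p hp
    simp only [Fin.val_mk]
    have e1 : ((p.2 : Fin n) : ℕ) % n = (p.2 : ℕ) := Nat.mod_eq_of_lt p.2.isLt
    have e2 : ((v p.1 : Fin n) : ℕ) % n = (v p.1 : ℕ) := Nat.mod_eq_of_lt (v p.1).isLt
    ext
    · simp only [e2]
      congr 1
      apply v.injective
      apply Fin.ext
      simp [e2]
    · simp [e1]

end SJO
namespace SJO

variable {n : ℕ}

lemma qRook_eq_sum (A : Board) (hA : A ⊆ grid n n) {F : Type*} [CommSemiring F] (q : F) :
    qRook q n n A n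
      = ∑ v ∈ Finset.univ.filter fun v : Perm (Fin n) => Covers A v, q ^ inversions v := by
  classical
  unfold qRook
  refine (Finset.sum_bij (fun (v : Perm (Fin n)) (_ : v ∈ Finset.univ.filter
      fun v : Perm (Fin n) => Covers A v) => pgraph v) ?_ ?_ ?_ ?_).symm
  · -- maps into rookConfigs
    intro v hv
    rw [Finset.mem_filter] at hv
    rw [rookConfigs, Finset.mem_filter, Finset.mem_powerset]
    refine ⟨covers_iff_pgraph_subset.mp hv.2, card_pgraph v, ?_⟩
    rintro c hc c' hc' hne
    obtain ⟨i, rfl⟩ := mem_pgraph.mp hc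
    obtain ⟨i', rfl⟩ := mem_pgraph.mp hc'
    have hii : i ≠ i' := fun h => hne (by rw [h])
    constructor
    · simp only
      intro h
      exact hii (Fin.ext h)
    · simp only
      intro h
      exact hii (v.injective (Fin.ext h))
  · -- injective
    intro v hv v' hv' h
    exact pgraph_inj h
  · -- surjective
    intro C hC
    rw [rookConfigs, Finset.mem_filter, Finset.mem_powerset] at hC
    obtain ⟨hCA, hCard, hdist⟩ := hC
    have hCgrid : ∀ c ∈ C, c.1 < n ∧ c.2 < n := fun c hc => mem_grid.mp (hA (hCA hc))
    have hrow : ∀ i : Fin n, ∃ c, c ∈ C ∧ c.1 = (i : ℕ) := by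
      intro i
      have hinj : Set.InjOn Prod.fst (C : Set (ℕ × ℕ)) := by
        intro c hc c' hc' h
        by_contra hne
        exact (hdist c hc c' hc' hne).1 h
      have hcard_img : (C.image Prod.fst).card = n := by
        rw [Finset.card_image_of_injOn hinj, hCard]
      have hsub : C.image Prod.fst ⊆ Finset.range n := by
        intro x hx
        rw [Finset.mem_image] at hx
        obtain ⟨c, hc, rfl⟩ := hx
        rw [Finset.mem_range]
        exact (hCgrid c hc).1
      have heq : C.image Prod.fst = Finset.range n :=
        Finset.eq_of_subset_of_card_le hsub (by rw [hcard_img, Finset.card_range])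
      have : (i : ℕ) ∈ C.image Prod.fst := by
        rw [heq, Finset.mem_range]; exact i.isLt
      rw [Finset.mem_image] at this
      obtain ⟨c, hc, hcf⟩ := this
      exact ⟨c, hc, hcf⟩
    choose cel hcel hcelf using hrow
    have ginj : Function.Injective (fun i : Fin n =>
        (⟨(cel i).2, (hCgrid _ (hcel i)).2⟩ : Fin n)) := by
      intro i i' h
      have h2 : (cel i).2 = (cel i').2 := congrArg Fin.val h
      have hcc : cel i = cel i' := by
        by_contra hne
        exact (hdist _ (hcel i) _ (hcel i') hne).2 h2
      apply Fin.ext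
      rw [← hcelf i, ← hcelf i', hcc]
    have gbij := (Fintype.bijective_iff_injective_and_card _).mpr ⟨ginj, rfl⟩
    set v : Perm (Fin n) := Equiv.ofBijective _ gbij with hvdef
    have hpg : pgraph v = C := by
      apply Finset.eq_of_subset_of_card_le
      · intro c hc
        obtain ⟨i, rfl⟩ := mem_pgraph.mp hc
        have hstep : ((i : ℕ), (v i : ℕ)) = cel i := by
          have hv : (v i : ℕ) = (cel i).2 := rfl
          rw [hv, ← hcelf i]
        rw [hstep]
        exact hcel i
      · rw [hCard, card_pgraph]
    refine ⟨v, ?_, hpg⟩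
    rw [Finset.mem_filter]
    exact ⟨Finset.mem_univ v, covers_iff_pgraph_subset.mpr (by rw [hpg]; exact hCA)⟩
  · -- values agree
    intro v hv
    rw [invStat_pgraph]

lemma covers_inter_iff {A B : Board} {v : Perm (Fin n)} :
    Covers (A ∩ B) v ↔ Covers A v ∧ Covers B v := by
  unfold Covers
  simp only [Finset.mem_inter]
  exact forall_and

end SJO

/-- If `w` and `u^↕` avoid 4231, 35142, 42513 and 351624, then the Poincaré
polynomial of the Bruhat interval `[u,w]` equals the `n`-th `q`-rook number of the board
`H_R(w) ∩ H_L(u)`. -/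
theorem poincare_eq_qRook (n : ℕ) (u w : Equiv.Perm (Fin n))
    (hw : AvoidsThePatterns w) (hu : AvoidsThePatterns (Fin.revPerm.trans u))
    (HR HL : Board) (hHR : IsRightHull w HR) (hHL : IsLeftHull u HL) :
    ∑ v ∈ Finset.univ.filter fun v : Equiv.Perm (Fin n) => BruhatLE u v ∧ BruhatLE v w,
        (RatFunc.X : RatFunc ℚ) ^ inversions v =
      qRook (RatFunc.X : RatFunc ℚ) n n (HR ∩ HL) n := by
  classical
  have hHReq := SJO.rightHull_eq hHR
  have hHLeq := SJO.leftHull_eq hHL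
  have hsub : HR ∩ HL ⊆ grid n n := by
    intro c hc
    rw [Finset.mem_inter] at hc
    rw [hHReq] at hc
    exact Finset.filter_subset _ _ hc.1
  rw [SJO.qRook_eq_sum _ hsub]
  apply Finset.sum_congr _ (fun _ _ => rfl)
  apply Finset.filter_congr
  intro v _
  rw [SJO.covers_inter_iff, hHReq, hHLeq,
    SJO.covers_rightExplicit_iff, SJO.covers_leftExplicit_iff,
    SJO.covR_iff_bruhat hw, SJO.covL_iff_bruhat hu]
  exact Iff.symm and_comm
end

section
/- Let n ≥ 1 and let w ∈ S_{2n} be the permutation (n+1, n+2, …, 2n, 1, 2, …, n), and let w^↕ ∈ S_{2n} be w flipped upside down, i.e., w^↕(i) = w(2n−i+1). Then the closed Bruhat interval [w^↕, w] in S_{2n} has exactly 2^n elements. -/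
open Finset

namespace Stmt5Aux

open Finset

/-! Auxiliary machinery for `card_interval_eq_two_pow`. -/

def Ffun (n : ℕ) (S : Finset ℕ) (a : ℕ) : ℕ :=
  if a < n then (if a ∈ S then n + a else n - 1 - a)
  else if 2 * n - 1 - a ∈ S then a - n else 3 * n - 1 - a

def Gfun (n : ℕ) (S : Finset ℕ) (b : ℕ) : ℕ :=
  if b < n then (if n - 1 - b ∈ S then n + b else n - 1 - b)
  else if b - n ∈ S then b - n else 3 * n - 1 - b

lemma Ffun_lt {n : ℕ} (hn : 0 < n) (S : Finset ℕ) {a : ℕ} (ha : a < 2 * n) :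
    Ffun n S a < 2 * n := by
  unfold Ffun; split_ifs <;> omega

lemma Gfun_lt {n : ℕ} (hn : 0 < n) (S : Finset ℕ) {b : ℕ} (hb : b < 2 * n) :
    Gfun n S b < 2 * n := by
  unfold Gfun; split_ifs <;> omega

lemma Gfun_Ffun {n : ℕ} (hn : 0 < n) (S : Finset ℕ) {a : ℕ} (ha : a < 2 * n) :
    Gfun n S (Ffun n S a) = a := by
  by_cases h1 : a < n
  · by_cases h2 : a ∈ S
    · have e : Ffun n S a = n + a := by simp [Ffun, h1, h2]
      rw [e, Gfun, if_neg (by omega)]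
      have h3 : n + a - n = a := by omega
      rw [h3, if_pos h2]
    · have e : Ffun n S a = n - 1 - a := by simp [Ffun, h1, h2]
      rw [e, Gfun, if_pos (by omega)]
      have h3 : n - 1 - (n - 1 - a) = a := by omega
      rw [h3, if_neg h2]
  · by_cases h2 : 2 * n - 1 - a ∈ S
    · have e : Ffun n S a = a - n := by simp [Ffun, h1, h2]
      rw [e, Gfun, if_pos (by omega)]
      have h3 : n - 1 - (a - n) = 2 * n - 1 - a := by omega
      rw [h3, if_pos h2]
      omega
    · have e : Ffun n S a = 3 * n - 1 - a := by simp [Ffun, h1, h2]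
      rw [e, Gfun, if_neg (by omega)]
      have h3 : 3 * n - 1 - a - n = 2 * n - 1 - a := by omega
      rw [h3, if_neg h2]
      omega

noncomputable def Pperm (n : ℕ) (hn : 0 < n) (S : Finset ℕ) : Equiv.Perm (Fin (2 * n)) :=
  Equiv.ofBijective (fun a => ⟨Ffun n S a.1, Ffun_lt hn S a.2⟩)
    (Finite.injective_iff_bijective.mp
      (Function.LeftInverse.injective
        (g := fun b : Fin (2 * n) => ⟨Gfun n S b.1, Gfun_lt hn S b.2⟩)
        (fun a => Fin.ext (Gfun_Ffun hn S a.2))))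

lemma Pperm_val {n : ℕ} (hn : 0 < n) (S : Finset ℕ) (a : Fin (2 * n)) :
    ((Pperm n hn S) a : ℕ) = Ffun n S (a : ℕ) := rfl

lemma card_filter_val_Icc (m lo hi : ℕ) (h : hi < m) :
    (univ.filter fun a : Fin m => lo ≤ (a : ℕ) ∧ (a : ℕ) ≤ hi).card = hi + 1 - lo := by
  rw [← Nat.card_Icc lo hi]
  apply Finset.card_nbij (i := fun a : Fin m => (a : ℕ))
  · intro a ha
    simp only [mem_coe, mem_filter, mem_univ, true_and] at ha
    simpa [Finset.mem_Icc] using ha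
  · intro a _ b _ hab
    exact Fin.ext hab
  · intro b hb
    simp only [coe_filter, mem_univ, true_and, Finset.mem_coe, Finset.coe_Icc,
      Set.mem_Icc] at hb
    exact ⟨⟨b, by omega⟩, by simp [Set.mem_setOf_eq, hb.1, hb.2], rfl⟩

lemma card_filter_perm_apply {m : ℕ} (v : Equiv.Perm (Fin m)) (p : Fin m → Prop)
    [DecidablePred p] :
    (univ.filter fun a => p (v a)).card = (univ.filter p).card := by
  apply Finset.card_nbij (i := fun a => v a)
  · intro a ha
    simp only [mem_coe, mem_filter, mem_univ, true_and] at ha ⊢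
    exact ha
  · intro a _ b _ hab
    exact v.injective hab
  · intro b hb
    simp only [coe_filter, mem_univ, true_and, Set.mem_setOf_eq] at hb ⊢
    exact ⟨v.symm b, by simpa using hb, by simp⟩

end Stmt5Aux

open Finset in
lemma Stmt5Aux.wud_val {n : ℕ} (w : Equiv.Perm (Fin (2 * n)))
    (hw : ∀ i : Fin (2 * n), (w i : ℕ) = if (i : ℕ) < n then (i : ℕ) + n else (i : ℕ) - n)
    (a : Fin (2 * n)) :
    ((Fin.revPerm.trans w) a : ℕ) =
      if (a : ℕ) < n then n - 1 - (a : ℕ) else 3 * n - 1 - (a : ℕ) := by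
  have h : ((Fin.revPerm.trans w) a : ℕ) = (w a.rev : ℕ) := by
    rw [Equiv.trans_apply, Fin.revPerm_apply]
  rw [h, hw, Fin.val_rev]
  have := a.isLt
  split_ifs <;> omega

namespace Stmt5Aux

open Finset

variable {n : ℕ}

lemma P_le_w (hn : 0 < n) (w : Equiv.Perm (Fin (2 * n)))
    (hw : ∀ i : Fin (2 * n), (w i : ℕ) = if (i : ℕ) < n then (i : ℕ) + n else (i : ℕ) - n)
    (S : Finset ℕ) : BruhatLE (Pperm n hn S) w := by
  intro i j
  unfold bruhatRank
  apply Finset.card_le_card_of_injOn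
    (fun a : Fin (2 * n) =>
      if n ≤ (a : ℕ) ∧ (a : ℕ) - n < (j : ℕ) ∧ 2 * n - 1 - (a : ℕ) ∉ S then
        ⟨2 * n - 1 - (a : ℕ), by have := a.isLt; omega⟩ else a)
  · intro a ha
    simp only [mem_coe, mem_filter, mem_univ, true_and] at ha ⊢
    obtain ⟨hai, haj⟩ := ha
    rw [Fin.le_def] at hai haj
    have haj' : (j : ℕ) ≤ Ffun n S (a : ℕ) := haj
    have halt := a.isLt
    split_ifs with hc
    · obtain ⟨hc1, hc2, hc3⟩ := hc
      refine ⟨?_, ?_⟩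
      · rw [Fin.le_def]
        show 2 * n - 1 - (a : ℕ) ≤ (i : ℕ)
        omega
      · rw [Fin.le_def, hw]
        have hF : Ffun n S (a : ℕ) = 3 * n - 1 - (a : ℕ) := by
          unfold Ffun
          rw [if_neg (by omega), if_neg hc3]
        show (j : ℕ) ≤ if 2 * n - 1 - (a : ℕ) < n then 2 * n - 1 - (a : ℕ) + n
          else 2 * n - 1 - (a : ℕ) - n
        rw [if_pos (by omega)]
        omega
    · refine ⟨by rw [Fin.le_def]; exact hai, ?_⟩
      rw [Fin.le_def, hw]
      push_neg at hc
      by_cases h1 : (a : ℕ) < n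
      · have hF : Ffun n S (a : ℕ) ≤ n + (a : ℕ) := by
          unfold Ffun; split_ifs <;> omega
        rw [if_pos h1]; omega
      · rw [if_neg h1]
        by_cases h2 : 2 * n - 1 - (a : ℕ) ∈ S
        · have hF : Ffun n S (a : ℕ) = (a : ℕ) - n := by simp [Ffun, h1, h2]
          omega
        · have h3 : ¬((a : ℕ) - n < (j : ℕ)) := fun hlt => h2 (hc (by omega) hlt)
          omega
  · intro a ha b hb hab
    simp only [coe_filter, Set.mem_setOf_eq, mem_univ, true_and] at ha hb
    have halt := a.isLt
    have hblt := b.isLt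
    beta_reduce at hab
    split_ifs at hab with hca hcb hcb
    · obtain ⟨hca1, hca2, hca3⟩ := hca
      obtain ⟨hcb1, hcb2, hcb3⟩ := hcb
      have := congrArg Fin.val hab
      simp only [Fin.val_mk] at this
      exact Fin.ext (by omega)
    · exfalso
      obtain ⟨hca1, hca2, hca3⟩ := hca
      have hval : 2 * n - 1 - (a : ℕ) = (b : ℕ) := congrArg Fin.val hab
      have hbj : (j : ℕ) ≤ Ffun n S (b : ℕ) := by
        have := hb.2; rw [Fin.le_def] at this; exact this
      have hbn : (b : ℕ) < n := by omega
      have hbS : (b : ℕ) ∉ S := by rw [← hval]; exact hca3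
      have hF : Ffun n S (b : ℕ) = n - 1 - (b : ℕ) := by simp [Ffun, hbn, hbS]
      omega
    · exfalso
      obtain ⟨hcb1, hcb2, hcb3⟩ := hcb
      have hval : (a : ℕ) = 2 * n - 1 - (b : ℕ) := congrArg Fin.val hab
      have haj : (j : ℕ) ≤ Ffun n S (a : ℕ) := by
        have := ha.2; rw [Fin.le_def] at this; exact this
      have han : (a : ℕ) < n := by omega
      have haS : (a : ℕ) ∉ S := by rw [hval]; exact hcb3
      have hF : Ffun n S (a : ℕ) = n - 1 - (a : ℕ) := by simp [Ffun, han, haS]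
      omega
    · exact hab

lemma wud_le_P (hn : 0 < n) (w : Equiv.Perm (Fin (2 * n)))
    (hw : ∀ i : Fin (2 * n), (w i : ℕ) = if (i : ℕ) < n then (i : ℕ) + n else (i : ℕ) - n)
    (S : Finset ℕ) : BruhatLE (Fin.revPerm.trans w) (Pperm n hn S) := by
  intro i j
  unfold bruhatRank
  apply Finset.card_le_card_of_injOn
    (fun a : Fin (2 * n) =>
      if n ≤ (a : ℕ) ∧ (a : ℕ) - n < (j : ℕ) ∧ 2 * n - 1 - (a : ℕ) ∈ S then
        ⟨2 * n - 1 - (a : ℕ), by have := a.isLt; omega⟩ else a)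
  · intro a ha
    simp only [mem_coe, mem_filter, mem_univ, true_and] at ha ⊢
    obtain ⟨hai, haj⟩ := ha
    rw [Fin.le_def] at hai haj
    rw [wud_val w hw a] at haj
    have halt := a.isLt
    split_ifs with hc
    · obtain ⟨hc1, hc2, hc3⟩ := hc
      refine ⟨?_, ?_⟩
      · rw [Fin.le_def]
        show 2 * n - 1 - (a : ℕ) ≤ (i : ℕ)
        omega
      · rw [Fin.le_def]
        have hF : Ffun n S (2 * n - 1 - (a : ℕ)) = n + (2 * n - 1 - (a : ℕ)) := by
          unfold Ffun
          rw [if_pos (by omega), if_pos hc3]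
        show (j : ℕ) ≤ Ffun n S (2 * n - 1 - (a : ℕ))
        rw [hF]
        rw [if_neg (by omega)] at haj
        omega
    · refine ⟨by rw [Fin.le_def]; exact hai, ?_⟩
      rw [Fin.le_def]
      show (j : ℕ) ≤ Ffun n S (a : ℕ)
      push_neg at hc
      by_cases h1 : (a : ℕ) < n
      · rw [if_pos h1] at haj
        have hF : n - 1 - (a : ℕ) ≤ Ffun n S (a : ℕ) := by
          unfold Ffun; split_ifs <;> omega
        omega
      · rw [if_neg h1] at haj
        by_cases h2 : 2 * n - 1 - (a : ℕ) ∈ S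
        · have h3 : ¬((a : ℕ) - n < (j : ℕ)) := fun hlt => (hc (by omega) hlt) h2
          have hF : Ffun n S (a : ℕ) = (a : ℕ) - n := by simp [Ffun, h1, h2]
          omega
        · have hF : Ffun n S (a : ℕ) = 3 * n - 1 - (a : ℕ) := by simp [Ffun, h1, h2]
          omega
  · intro a ha b hb hab
    simp only [coe_filter, Set.mem_setOf_eq, mem_univ, true_and] at ha hb
    have halt := a.isLt
    have hblt := b.isLt
    beta_reduce at hab
    split_ifs at hab with hca hcb hcb
    · obtain ⟨hca1, hca2, hca3⟩ := hca
      obtain ⟨hcb1, hcb2, hcb3⟩ := hcb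
      have := congrArg Fin.val hab
      simp only [Fin.val_mk] at this
      exact Fin.ext (by omega)
    · exfalso
      obtain ⟨hca1, hca2, hca3⟩ := hca
      have hval : 2 * n - 1 - (a : ℕ) = (b : ℕ) := congrArg Fin.val hab
      have hbj : (j : ℕ) ≤ ((Fin.revPerm.trans w) b : ℕ) := by
        have := hb.2; rw [Fin.le_def] at this; exact this
      rw [wud_val w hw b] at hbj
      rw [if_pos (by omega)] at hbj
      omega
    · exfalso
      obtain ⟨hcb1, hcb2, hcb3⟩ := hcb
      have hval : (a : ℕ) = 2 * n - 1 - (b : ℕ) := congrArg Fin.val hab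
      have haj : (j : ℕ) ≤ ((Fin.revPerm.trans w) a : ℕ) := by
        have := ha.2; rw [Fin.le_def] at this; exact this
      rw [wud_val w hw a] at haj
      rw [if_pos (by omega)] at haj
      omega
    · exact hab

end Stmt5Aux

namespace Stmt5Aux

open Finset

variable {n : ℕ}

section VStruct

variable (hn : 0 < n) (w : Equiv.Perm (Fin (2 * n)))
  (hw : ∀ i : Fin (2 * n), (w i : ℕ) = if (i : ℕ) < n then (i : ℕ) + n else (i : ℕ) - n)
  (v : Equiv.Perm (Fin (2 * n)))
  (hv1 : BruhatLE (Fin.revPerm.trans w) v) (hv2 : BruhatLE v w)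

include hn hw hv2 in
lemma vup_top : ∀ i < n, ∀ a : Fin (2 * n), (a : ℕ) ≤ i → (v a : ℕ) ≤ n + i := by
  intro i hi a ha
  have hpi : i < 2 * n := by omega
  rcases Nat.lt_or_ge (n + i + 1) (2 * n) with hj | hj
  swap
  · have := (v a).isLt; omega
  · have h := hv2 ⟨i, hpi⟩ ⟨n + i + 1, hj⟩
    have hw0 : bruhatRank w ⟨i, hpi⟩ ⟨n + i + 1, hj⟩ = 0 := by
      unfold bruhatRank
      rw [Finset.card_eq_zero, Finset.filter_eq_empty_iff]
      intro x _
      rintro ⟨hx1, hx2⟩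
      rw [Fin.le_def] at hx1 hx2
      rw [hw] at hx2
      have hx1' : (x : ℕ) ≤ i := hx1
      rw [if_pos (by omega)] at hx2
      have hx2' : n + i + 1 ≤ (x : ℕ) + n := hx2
      omega
    rw [hw0, Nat.le_zero] at h
    unfold bruhatRank at h
    rw [Finset.card_eq_zero, Finset.filter_eq_empty_iff] at h
    have h2 := h (mem_univ a)
    by_contra hcon
    exact h2 ⟨by rw [Fin.le_def]; exact ha,
      by rw [Fin.le_def]; show n + i + 1 ≤ (v a : ℕ); omega⟩

include hn hw hv1 in
lemma vlow_top : ∀ i < n, ∀ a : Fin (2 * n), (a : ℕ) ≤ i → n - 1 - i ≤ (v a : ℕ) := by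
  intro i hi a ha
  by_contra hcon
  push_neg at hcon
  have hpi : i < 2 * n := by omega
  have hpj : n - 1 - i < 2 * n := by omega
  have hle := hv1 ⟨i, hpi⟩ ⟨n - 1 - i, hpj⟩
  unfold bruhatRank at hle
  have hsub : (univ.filter fun x : Fin (2 * n) =>
        x ≤ ⟨i, hpi⟩ ∧ (⟨n - 1 - i, hpj⟩ : Fin (2 * n)) ≤ v x) ⊂
      (univ.filter fun x : Fin (2 * n) =>
        x ≤ ⟨i, hpi⟩ ∧ (⟨n - 1 - i, hpj⟩ : Fin (2 * n)) ≤ (Fin.revPerm.trans w) x) := by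
    rw [Finset.ssubset_def]
    constructor
    · intro x hx
      simp only [mem_filter, mem_univ, true_and] at hx ⊢
      refine ⟨hx.1, ?_⟩
      have hx1 : (x : ℕ) ≤ i := by have := hx.1; rw [Fin.le_def] at this; exact this
      rw [Fin.le_def, wud_val w hw x, if_pos (by omega)]
      show n - 1 - i ≤ n - 1 - (x : ℕ)
      omega
    · intro hall
      have hmem : a ∈ (univ.filter fun x : Fin (2 * n) =>
          x ≤ ⟨i, hpi⟩ ∧ (⟨n - 1 - i, hpj⟩ : Fin (2 * n)) ≤ (Fin.revPerm.trans w) x) := by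
        simp only [mem_filter, mem_univ, true_and]
        refine ⟨by rw [Fin.le_def]; exact ha, ?_⟩
        rw [Fin.le_def, wud_val w hw a, if_pos (by omega)]
        show n - 1 - i ≤ n - 1 - (a : ℕ)
        omega
      have := hall hmem
      simp only [mem_filter, mem_univ, true_and] at this
      have h2 := this.2
      rw [Fin.le_def] at h2
      have h2' : n - 1 - i ≤ (v a : ℕ) := h2
      omega
  exact absurd (Finset.card_lt_card hsub) (Nat.not_lt.mpr hle)

include hn hw hv1 in
lemma vup_bot : ∀ i < n, ∀ b : Fin (2 * n), 2 * n - 1 - i ≤ (b : ℕ) → (v b : ℕ) ≤ n + i := by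
  intro i hi b hb
  rcases Nat.lt_or_ge (n + i + 1) (2 * n) with hj | hj
  swap
  · have := (v b).isLt; omega
  · by_contra hcon
    push_neg at hcon
    have hpr : 2 * n - 2 - i < 2 * n := by omega
    have hle := hv1 ⟨2 * n - 2 - i, hpr⟩ ⟨n + i + 1, hj⟩
    unfold bruhatRank at hle
    have hwud : (univ.filter fun x : Fin (2 * n) =>
          x ≤ ⟨2 * n - 2 - i, hpr⟩ ∧
            (⟨n + i + 1, hj⟩ : Fin (2 * n)) ≤ (Fin.revPerm.trans w) x) =
        univ.filter (fun x : Fin (2 * n) => n ≤ (x : ℕ) ∧ (x : ℕ) ≤ 2 * n - 2 - i) := by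
      ext x
      simp only [mem_filter, mem_univ, true_and, Fin.le_def]
      rw [wud_val w hw x]
      have := x.isLt
      constructor
      · rintro ⟨h1, h2⟩
        have h1' : (x : ℕ) ≤ 2 * n - 2 - i := h1
        split_ifs at h2 with hxn
        · have h2' : n + i + 1 ≤ n - 1 - (x : ℕ) := h2
          omega
        · have h2' : n + i + 1 ≤ 3 * n - 1 - (x : ℕ) := h2
          omega
      · rintro ⟨h1, h2⟩
        refine ⟨h2, ?_⟩
        rw [if_neg (by omega)]
        show n + i + 1 ≤ 3 * n - 1 - (x : ℕ)
        omega
    have hglob : (univ.filter fun x : Fin (2 * n) =>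
        (⟨n + i + 1, hj⟩ : Fin (2 * n)) ≤ v x).card = 2 * n - (n + i + 1) := by
      rw [card_filter_perm_apply v (fun y => (⟨n + i + 1, hj⟩ : Fin (2 * n)) ≤ y)]
      have he : (univ.filter fun y : Fin (2 * n) => (⟨n + i + 1, hj⟩ : Fin (2 * n)) ≤ y) =
          univ.filter (fun y : Fin (2 * n) => n + i + 1 ≤ (y : ℕ) ∧ (y : ℕ) ≤ 2 * n - 1) := by
        ext y
        simp only [mem_filter, mem_univ, true_and, Fin.le_def, Fin.val_mk]
        have := y.isLt
        omega
      rw [he, card_filter_val_Icc _ _ _ (by omega)]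
      omega
    have hsub2 : (univ.filter fun x : Fin (2 * n) =>
          x ≤ ⟨2 * n - 2 - i, hpr⟩ ∧ (⟨n + i + 1, hj⟩ : Fin (2 * n)) ≤ v x) ⊆
        (univ.filter fun x : Fin (2 * n) =>
          (⟨n + i + 1, hj⟩ : Fin (2 * n)) ≤ v x).erase b := by
      intro x hx
      simp only [mem_filter, mem_univ, true_and] at hx
      rw [Finset.mem_erase]
      refine ⟨?_, by simp only [mem_filter, mem_univ, true_and]; exact hx.2⟩
      have hx1 : (x : ℕ) ≤ 2 * n - 2 - i := by have := hx.1; rw [Fin.le_def] at this; exact this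
      exact Fin.ne_of_val_ne (by omega)
    have hcard2 := Finset.card_le_card hsub2
    rw [Finset.card_erase_of_mem (by
      simp only [mem_filter, mem_univ, true_and]
      rw [Fin.le_def]
      show n + i + 1 ≤ (v b : ℕ)
      omega)] at hcard2
    rw [hglob] at hcard2
    rw [hwud, card_filter_val_Icc _ _ _ (by omega)] at hle
    omega

include hn hw hv2 in
lemma vlow_bot : ∀ i < n, ∀ b : Fin (2 * n), 2 * n - 1 - i ≤ (b : ℕ) → n - 1 - i ≤ (v b : ℕ) := by
  intro i hi b hb
  by_contra hcon
  push_neg at hcon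
  have hii : i + 2 ≤ n := by omega
  have hpr : 2 * n - 2 - i < 2 * n := by omega
  have hpj : n - 1 - i < 2 * n := by omega
  have hle := hv2 ⟨2 * n - 2 - i, hpr⟩ ⟨n - 1 - i, hpj⟩
  unfold bruhatRank at hle
  have hwrank : (univ.filter fun x : Fin (2 * n) =>
        x ≤ ⟨2 * n - 2 - i, hpr⟩ ∧ (⟨n - 1 - i, hpj⟩ : Fin (2 * n)) ≤ w x) =
      univ.filter (fun x : Fin (2 * n) => 0 ≤ (x : ℕ) ∧ (x : ℕ) ≤ n - 1) := by
    ext x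
    simp only [mem_filter, mem_univ, true_and, Fin.le_def]
    rw [hw]
    have := x.isLt
    constructor
    · rintro ⟨h1, h2⟩
      have h1' : (x : ℕ) ≤ 2 * n - 2 - i := h1
      split_ifs at h2 with hxn
      · omega
      · have h2' : n - 1 - i ≤ (x : ℕ) - n := h2
        omega
    · rintro ⟨h1, h2⟩
      refine ⟨show (x : ℕ) ≤ 2 * n - 2 - i by omega, ?_⟩
      rw [if_pos (by omega)]
      show n - 1 - i ≤ (x : ℕ) + n
      omega
  have hglob : (univ.filter fun x : Fin (2 * n) =>
      (⟨n - 1 - i, hpj⟩ : Fin (2 * n)) ≤ v x).card = n + 1 + i := by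
    rw [card_filter_perm_apply v (fun y => (⟨n - 1 - i, hpj⟩ : Fin (2 * n)) ≤ y)]
    have he : (univ.filter fun y : Fin (2 * n) => (⟨n - 1 - i, hpj⟩ : Fin (2 * n)) ≤ y) =
        univ.filter (fun y : Fin (2 * n) => n - 1 - i ≤ (y : ℕ) ∧ (y : ℕ) ≤ 2 * n - 1) := by
      ext y
      simp only [mem_filter, mem_univ, true_and, Fin.le_def, Fin.val_mk]
      have := y.isLt
      omega
    rw [he, card_filter_val_Icc _ _ _ (by omega)]
    omega
  have hsplit := Finset.card_filter_add_card_filter_not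
    (s := univ.filter fun x : Fin (2 * n) => (⟨n - 1 - i, hpj⟩ : Fin (2 * n)) ≤ v x)
    (p := fun x : Fin (2 * n) => (x : ℕ) ≤ 2 * n - 2 - i)
  have hA : ((univ.filter fun x : Fin (2 * n) =>
        (⟨n - 1 - i, hpj⟩ : Fin (2 * n)) ≤ v x).filter
        fun x : Fin (2 * n) => (x : ℕ) ≤ 2 * n - 2 - i) =
      univ.filter fun x : Fin (2 * n) =>
        x ≤ ⟨2 * n - 2 - i, hpr⟩ ∧ (⟨n - 1 - i, hpj⟩ : Fin (2 * n)) ≤ v x := by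
    rw [Finset.filter_filter]
    ext x
    simp only [mem_filter, mem_univ, true_and, Fin.le_def]
    constructor
    · rintro ⟨h1, h2⟩
      exact ⟨h2, h1⟩
    · rintro ⟨h1, h2⟩
      exact ⟨h2, h1⟩
  have hB : ((univ.filter fun x : Fin (2 * n) =>
        (⟨n - 1 - i, hpj⟩ : Fin (2 * n)) ≤ v x).filter
        fun x : Fin (2 * n) => ¬((x : ℕ) ≤ 2 * n - 2 - i)) ⊆
      (univ.filter fun x : Fin (2 * n) =>
        2 * n - 1 - i ≤ (x : ℕ) ∧ (x : ℕ) ≤ 2 * n - 1).erase b := by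
    intro x hx
    simp only [mem_filter, mem_univ, true_and] at hx
    rw [Finset.mem_erase]
    constructor
    · intro hxb
      rw [hxb] at hx
      have := hx.1
      rw [Fin.le_def] at this
      have h2 : n - 1 - i ≤ (v b : ℕ) := this
      omega
    · simp only [mem_filter, mem_univ, true_and]
      have := x.isLt
      omega
  have hBcard := Finset.card_le_card hB
  rw [Finset.card_erase_of_mem (by
    simp only [mem_filter, mem_univ, true_and]
    have := b.isLt
    omega)] at hBcard
  rw [card_filter_val_Icc _ _ _ (by omega)] at hBcard
  rw [hA] at hsplit
  rw [hglob] at hsplit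
  rw [hwrank, card_filter_val_Icc _ _ _ (by omega)] at hle
  omega

include hn hw hv1 hv2 in
lemma struct (i : ℕ) (hi : i < n) (hi1 : i < 2 * n) (hi2 : 2 * n - 1 - i < 2 * n) :
    ((v ⟨i, hi1⟩ : ℕ) = n - 1 - i ∧ (v ⟨2 * n - 1 - i, hi2⟩ : ℕ) = n + i) ∨
      ((v ⟨i, hi1⟩ : ℕ) = n + i ∧ (v ⟨2 * n - 1 - i, hi2⟩ : ℕ) = n - 1 - i) := by
  have hb1 : n - 1 - i ≤ (v ⟨i, hi1⟩ : ℕ) :=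
    vlow_top hn w hw v hv1 i hi ⟨i, hi1⟩ (Nat.le_refl i)
  have hb2 : (v ⟨i, hi1⟩ : ℕ) ≤ n + i :=
    vup_top hn w hw v hv2 i hi ⟨i, hi1⟩ (Nat.le_refl i)
  have hb3 : n - 1 - i ≤ (v ⟨2 * n - 1 - i, hi2⟩ : ℕ) :=
    vlow_bot hn w hw v hv2 i hi ⟨2 * n - 1 - i, hi2⟩ (Nat.le_refl _)
  have hb4 : (v ⟨2 * n - 1 - i, hi2⟩ : ℕ) ≤ n + i :=
    vup_bot hn w hw v hv1 i hi ⟨2 * n - 1 - i, hi2⟩ (Nat.le_refl _)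
  have hne : (⟨i, hi1⟩ : Fin (2 * n)) ≠ ⟨2 * n - 1 - i, hi2⟩ :=
    Fin.ne_of_val_ne (by show i ≠ 2 * n - 1 - i; omega)
  have hvne : (v ⟨i, hi1⟩ : ℕ) ≠ (v ⟨2 * n - 1 - i, hi2⟩ : ℕ) := by
    intro h
    exact hne (v.injective (Fin.ext h))
  by_cases hi0 : i = 0
  · subst hi0
    omega
  · have himg : ((univ.filter fun a : Fin (2 * n) =>
          (a : ℕ) ≤ i - 1 ∨ 2 * n - i ≤ (a : ℕ)).image v) =
        univ.filter (fun c : Fin (2 * n) => n - i ≤ (c : ℕ) ∧ (c : ℕ) ≤ n + i - 1) := by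
      apply Finset.eq_of_subset_of_card_le
      · intro c hc
        rw [Finset.mem_image] at hc
        obtain ⟨a, haQ, rfl⟩ := hc
        simp only [mem_filter, mem_univ, true_and] at haQ ⊢
        rcases haQ with h | h
        · have hlo := vlow_top hn w hw v hv1 (i - 1) (by omega) a (by omega)
          have hup := vup_top hn w hw v hv2 (i - 1) (by omega) a (by omega)
          omega
        · have hlo := vlow_bot hn w hw v hv2 (i - 1) (by omega) a (by omega)
          have hup := vup_bot hn w hw v hv1 (i - 1) (by omega) a (by omega)
          omega
      · rw [Finset.card_image_of_injective _ v.injective]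
        rw [card_filter_val_Icc _ _ _ (by omega)]
        have hQ : (univ.filter fun a : Fin (2 * n) =>
              (a : ℕ) ≤ i - 1 ∨ 2 * n - i ≤ (a : ℕ)) =
            (univ.filter fun a : Fin (2 * n) => 0 ≤ (a : ℕ) ∧ (a : ℕ) ≤ i - 1) ∪
              (univ.filter fun a : Fin (2 * n) => 2 * n - i ≤ (a : ℕ) ∧ (a : ℕ) ≤ 2 * n - 1) := by
          ext x
          simp only [mem_filter, mem_union, mem_univ, true_and]
          have := x.isLt
          omega
        rw [hQ, Finset.card_union_of_disjoint (by
            rw [Finset.disjoint_left]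
            intro x hx1 hx2
            simp only [mem_filter, mem_univ, true_and] at hx1 hx2
            omega),
          card_filter_val_Icc _ _ _ (by omega), card_filter_val_Icc _ _ _ (by omega)]
        omega
    have hnotmem : ∀ x : Fin (2 * n), ¬((x : ℕ) ≤ i - 1 ∨ 2 * n - i ≤ (x : ℕ)) →
        ¬(n - i ≤ (v x : ℕ) ∧ (v x : ℕ) ≤ n + i - 1) := by
      intro x hxQ hcon
      have hm : v x ∈ ((univ.filter fun a : Fin (2 * n) =>
          (a : ℕ) ≤ i - 1 ∨ 2 * n - i ≤ (a : ℕ)).image v) := by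
        rw [himg]
        simp only [mem_filter, mem_univ, true_and]
        exact hcon
      rw [Finset.mem_image] at hm
      obtain ⟨a, haQ, hav⟩ := hm
      have hax : a = x := v.injective hav
      subst hax
      simp only [mem_filter, mem_univ, true_and] at haQ
      exact hxQ haQ
    have h1 := hnotmem ⟨i, hi1⟩ (by
      show ¬(i ≤ i - 1 ∨ 2 * n - i ≤ i)
      omega)
    have h2 := hnotmem ⟨2 * n - 1 - i, hi2⟩ (by
      show ¬(2 * n - 1 - i ≤ i - 1 ∨ 2 * n - i ≤ 2 * n - 1 - i)
      omega)
    omega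

include hn hw hv1 hv2 in
lemma P_toS_eq :
    Pperm n hn ((range n).filter fun x =>
      n ≤ (if h : x < 2 * n then ((v ⟨x, h⟩ : Fin (2 * n)) : ℕ) else 0)) = v := by
  apply Equiv.ext
  intro x
  apply Fin.ext
  rw [Pperm_val]
  set S := (range n).filter fun x =>
      n ≤ (if h : x < 2 * n then ((v ⟨x, h⟩ : Fin (2 * n)) : ℕ) else 0) with hS
  have hmem : ∀ (y : ℕ) (hy : y < n) (hy2 : y < 2 * n),
      (y ∈ S ↔ n ≤ (v ⟨y, hy2⟩ : ℕ)) := by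
    intro y hy hy2
    rw [hS, mem_filter, mem_range, dif_pos hy2]
    exact ⟨fun h => h.2, fun h => ⟨hy, h⟩⟩
  have hxlt := x.isLt
  by_cases hx : (x : ℕ) < n
  · have hs := struct hn w hw v hv1 hv2 (x : ℕ) hx x.isLt (by omega)
    rw [Fin.eta] at hs
    unfold Ffun
    rw [if_pos hx]
    rcases hs with ⟨hA, _⟩ | ⟨hA, _⟩
    · rw [if_neg (fun hm => by
        have h' := (hmem (x : ℕ) hx x.isLt).mp hm
        rw [Fin.eta] at h'
        omega)]
      omega
    · rw [if_pos ((hmem (x : ℕ) hx x.isLt).mpr (by rw [Fin.eta]; omega))]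
      omega
  · have hk : 2 * n - 1 - (x : ℕ) < n := by omega
    have hk2 : 2 * n - 1 - (x : ℕ) < 2 * n := by omega
    have hk3 : 2 * n - 1 - (2 * n - 1 - (x : ℕ)) < 2 * n := by omega
    have hs := struct hn w hw v hv1 hv2 (2 * n - 1 - (x : ℕ)) hk hk2 hk3
    have hxeq : (⟨2 * n - 1 - (2 * n - 1 - (x : ℕ)), hk3⟩ : Fin (2 * n)) = x :=
      Fin.ext (by show 2 * n - 1 - (2 * n - 1 - (x : ℕ)) = (x : ℕ); omega)
    rw [hxeq] at hs
    unfold Ffun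
    rw [if_neg hx]
    rcases hs with ⟨hA, hB⟩ | ⟨hA, hB⟩
    · rw [if_neg (fun hm => by
        have := (hmem _ hk hk2).mp hm
        omega)]
      omega
    · rw [if_pos ((hmem _ hk hk2).mpr (by omega))]
      omega

end VStruct

lemma toS_P_eq (hn : 0 < n) (S : Finset ℕ) (hS : S ⊆ range n) :
    ((range n).filter fun x =>
      n ≤ (if h : x < 2 * n then (((Pperm n hn S) ⟨x, h⟩ : Fin (2 * n)) : ℕ) else 0)) = S := by
  ext y
  simp only [mem_filter, mem_range]
  constructor
  · rintro ⟨hy, hge⟩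
    rw [dif_pos (show y < 2 * n by omega)] at hge
    have hge' : n ≤ Ffun n S y := hge
    unfold Ffun at hge'
    rw [if_pos hy] at hge'
    by_contra hyS
    rw [if_neg hyS] at hge'
    omega
  · intro hyS
    have hy : y < n := mem_range.mp (hS hyS)
    refine ⟨hy, ?_⟩
    rw [dif_pos (show y < 2 * n by omega)]
    show n ≤ Ffun n S y
    unfold Ffun
    rw [if_pos hy, if_pos hyS]
    omega

end Stmt5Aux

/-- For `w = (n+1, …, 2n, 1, …, n) ∈ S_{2n}` (the maximal element of
`A_{2n-1}^{S∖{sₙ}}`), the closed Bruhat interval `[w^↕, w]` has exactly `2^n` elements. -/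
theorem card_interval_eq_two_pow (n : ℕ) (hn : 1 ≤ n) (w : Equiv.Perm (Fin (2 * n)))
    (hw : ∀ i : Fin (2 * n), (w i : ℕ) = if (i : ℕ) < n then (i : ℕ) + n else (i : ℕ) - n) :
    (Finset.univ.filter fun v : Equiv.Perm (Fin (2 * n)) =>
        BruhatLE (Fin.revPerm.trans w) v ∧ BruhatLE v w).card = 2 ^ n := by
  have hn' : 0 < n := hn
  rw [show (2 : ℕ) ^ n = ((Finset.range n).powerset).card by
    rw [Finset.card_powerset, Finset.card_range]]
  apply Finset.card_bij'
    (i := fun v _ => (Finset.range n).filter fun x =>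
      n ≤ (if h : x < 2 * n then ((v ⟨x, h⟩ : Fin (2 * n)) : ℕ) else 0))
    (j := fun S _ => Stmt5Aux.Pperm n hn' S)
  · intro v _
    exact Finset.mem_powerset.mpr (Finset.filter_subset _ _)
  · intro S _
    simp only [Finset.mem_filter, Finset.mem_univ, true_and]
    exact ⟨Stmt5Aux.wud_le_P hn' w hw S, Stmt5Aux.P_le_w hn' w hw S⟩
  · intro v hv
    simp only [Finset.mem_filter, Finset.mem_univ, true_and] at hv
    exact Stmt5Aux.P_toS_eq hn' w hw v hv.1 hv.2
  · intro S hS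
    exact Stmt5Aux.toS_P_eq hn' S (Finset.mem_powerset.mp hS)
end
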